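/- arXiv:0910.3299 — 8 statements merged into one kernel-verified Lean document; each statement's English description precedes it below -/
import Mathlib

section
/- Let X be a compact metric space and let A be a unital simple C*-algebra. For every closed two-sided ideal I of the C*-algebra C(X,A), setting X_I = {x ∈ X : f(x) = 0 for all f ∈ I} (a closed subset of X), one has I = {f ∈ C(X,A) : f(x) = 0 for all x ∈ X_I}. Consequently, the closed two-sided ideals of C(X,A) are exactly the sets {f ∈ C(X,A) : f(x) = 0 for all x ∈ Y} for closed subsets Y ⊆ X. -/
open scoped Topology

section aux
variable {X : Type*} [MetricSpace X] [CompactSpace X]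
variable {A : Type*} [NormedRing A] [StarRing A] [CStarRing A] [NormedAlgebra ℂ A]
  [CompleteSpace A] [StarModule ℂ A] [Nontrivial A]

lemma vanishSet_closed (Y : Set X) :
    IsClosed {f : C(X, A) | ∀ x ∈ Y, f x = 0} := by
  have : {f : C(X, A) | ∀ x ∈ Y, f x = 0} = ⋂ x ∈ Y, (fun f : C(X,A) => f x) ⁻¹' {0} := by
    ext f; simp
  rw [this]
  exact isClosed_biInter fun x _ =>
    IsClosed.preimage (continuous_eval_const x) isClosed_singleton

noncomputable def vanishIdeal (Y : Set X) : TwoSidedIdeal C(X, A) :=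
  TwoSidedIdeal.mk' {f : C(X, A) | ∀ x ∈ Y, f x = 0}
    (fun _ _ => rfl)
    (fun hf hg x hx => by simp [hf x hx, hg x hx])
    (fun hf x hx => by simp [hf x hx])
    (fun hf x hx => by simp [hf x hx])
    (fun hf x hx => by simp [hf x hx])

lemma exists_near_one
    (hA : ∀ I : TwoSidedIdeal A, IsClosed (I : Set A) → I = ⊥ ∨ I = ⊤)
    (I : TwoSidedIdeal C(X, A)) (x : X) (hx : ∃ g ∈ I, g x ≠ 0)
    {δ : ℝ} (hδ : 0 < δ) : ∃ g ∈ I, ‖g x - 1‖ < δ := by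
  set S : Set A := {a | ∃ g ∈ I, g x = a} with hS
  have h0 : (0:A) ∈ S := ⟨0, I.zero_mem, rfl⟩
  have hadd : ∀ {a b : A}, a ∈ S → b ∈ S → a + b ∈ S := by
    rintro a b ⟨g, hg, rfl⟩ ⟨g', hg', rfl⟩
    exact ⟨g + g', I.add_mem hg hg', rfl⟩
  have hneg : ∀ {a : A}, a ∈ S → -a ∈ S := by
    rintro a ⟨g, hg, rfl⟩; exact ⟨-g, I.neg_mem hg, rfl⟩
  have hml : ∀ {b a : A}, a ∈ S → b * a ∈ S := by
    rintro b a ⟨g, hg, rfl⟩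
    exact ⟨ContinuousMap.const X b * g, I.mul_mem_left _ _ hg, rfl⟩
  have hmr : ∀ {a b : A}, a ∈ S → a * b ∈ S := by
    rintro a b ⟨g, hg, rfl⟩
    exact ⟨g * ContinuousMap.const X b, I.mul_mem_right _ _ hg, rfl⟩
  set J : TwoSidedIdeal A := TwoSidedIdeal.mk' (closure S)
    (subset_closure h0)
    (fun ha hb => map_mem_closure₂ continuous_add ha hb fun _ hu _ hv => hadd hu hv)
    (fun ha => map_mem_closure continuous_neg ha fun _ hu => hneg hu)
    (fun {u v} hv => map_mem_closure (continuous_mul_left u) hv fun _ h => hml h)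
    (fun {u v} hu => map_mem_closure (f := fun y => y * v) (continuous_mul_right v) hu fun _ h => hmr h)
    with hJ
  have hJcoe : (J : Set A) = closure S := TwoSidedIdeal.coe_mk' _ _ _ _ _ _
  have hJclosed : IsClosed (J : Set A) := hJcoe ▸ isClosed_closure
  rcases hA J hJclosed with hbot | htop
  · exfalso
    obtain ⟨g, hg, hgx⟩ := hx
    have : g x ∈ J := by
      rw [hJ, TwoSidedIdeal.mem_mk']
      exact subset_closure ⟨g, hg, rfl⟩
    rw [hbot, TwoSidedIdeal.mem_bot] at this
    exact hgx this
  · have h1 : (1:A) ∈ closure S := by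
      have : (1:A) ∈ J := htop ▸ TwoSidedIdeal.mem_top _
      rwa [hJ, TwoSidedIdeal.mem_mk'] at this
    rw [Metric.mem_closure_iff] at h1
    obtain ⟨a, ⟨g, hg, rfl⟩, hd⟩ := h1 δ hδ
    refine ⟨g, hg, ?_⟩
    rwa [dist_comm, dist_eq_norm] at hd

end aux

section main
variable {X : Type*} [MetricSpace X] [CompactSpace X]
variable {A : Type*} [NormedRing A] [StarRing A] [CStarRing A] [NormedAlgebra ℂ A]
  [CompleteSpace A] [StarModule ℂ A] [Nontrivial A]

lemma mem_of_vanish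
    (hA : ∀ I : TwoSidedIdeal A, IsClosed (I : Set A) → I = ⊥ ∨ I = ⊤)
    (I : TwoSidedIdeal C(X, A)) (hI : IsClosed (I : Set C(X, A)))
    (f : C(X, A)) (hf : ∀ x : X, (∀ g ∈ I, g x = 0) → f x = 0) : f ∈ I := by
  have key : ∀ ε : ℝ, 0 < ε → ∃ h, h ∈ I ∧ ‖f - h‖ ≤ ε := by
    intro ε hε
    set δ : ℝ := ε / (‖f‖ + 1) with hδdef
    have hδ : 0 < δ := div_pos hε (by positivity)
    have hfδ : ‖f‖ * δ ≤ ε := by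
      rw [hδdef]
      rw [mul_div_assoc']
      apply div_le_of_le_mul₀ (by positivity) (le_of_lt hε)
      nlinarith [norm_nonneg f]
    set K : Set X := {y | ε ≤ ‖f y‖} with hK
    have hKclosed : IsClosed K := by
      have : K = (fun y => ‖f y‖) ⁻¹' (Set.Ici ε) := rfl
      rw [this]
      exact IsClosed.preimage (f.continuous.norm) isClosed_Ici
    have hKcompact : IsCompact K := hKclosed.isCompact
    have hy : ∀ y : X, ∃ g : C(X,A), g ∈ I ∧ (y ∈ K → ‖g y - 1‖ < δ) := by
      intro y
      by_cases hyK : y ∈ K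
      · have hne : ∃ g ∈ I, g y ≠ 0 := by
          by_contra h
          push_neg at h
          have := hf y h
          have h2 : ε ≤ ‖f y‖ := hyK
          rw [this, norm_zero] at h2
          linarith
        obtain ⟨g, hg, hg1⟩ := exists_near_one hA I y hne hδ
        exact ⟨g, hg, fun _ => hg1⟩
      · exact ⟨0, I.zero_mem, fun h => absurd h hyK⟩
    choose g hgI hg1 using hy
    set U : X → Set X := fun y => {z | ‖g y z - 1‖ < δ} with hU
    have hUo : ∀ y, IsOpen (U y) := by
      intro y
      have : U y = (fun z => ‖g y z - 1‖) ⁻¹' (Set.Iio δ) := rfl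
      rw [this]
      exact IsOpen.preimage (by fun_prop) isOpen_Iio
    have hKU : K ⊆ ⋃ y : X, U y := fun z hz => Set.mem_iUnion.2 ⟨z, hg1 z hz⟩
    obtain ⟨t, ht⟩ := hKcompact.elim_finite_subcover U hUo hKU
    have ht' : K ⊆ ⋃ i : ↥t, U ↑i := by
      intro z hz
      obtain ⟨i, hit, hzi⟩ := Set.mem_iUnion₂.1 (ht hz)
      exact Set.mem_iUnion.2 ⟨⟨i, hit⟩, hzi⟩
    obtain ⟨ρ, hρ⟩ := PartitionOfUnity.exists_isSubordinate hKclosed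
      (fun i : ↥t => U ↑i) (fun i => hUo ↑i) ht'
    set e : ↥t → C(X, A) := fun i =>
      ⟨fun z => (ρ i z : ℝ) • (1 : A), ((ρ i).continuous.smul continuous_const)⟩ with he
    set h : C(X, A) := ∑ i : ↥t, e i * (f * g ↑i) with hh
    have hhI : h ∈ I := by
      apply sum_mem
      intro i _
      exact I.mul_mem_left _ _ (I.mul_mem_left _ _ (hgI ↑i))
    refine ⟨h, hhI, ?_⟩
    rw [ContinuousMap.norm_le _ (le_of_lt hε)]
    intro y
    set s : ℝ := ∑ i : ↥t, ρ i y with hs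
    have hs1 : s ≤ 1 := by
      rw [hs, ← finsum_eq_sum_of_fintype]
      exact ρ.sum_le_one y
    have hs0 : 0 ≤ s := Finset.sum_nonneg fun i _ => ρ.nonneg i y
    have hsK : y ∈ K → s = 1 := by
      intro hyK
      rw [hs, ← finsum_eq_sum_of_fintype]
      exact ρ.sum_eq_one hyK
    have hval : f y - h y = (1 - s) • f y + ∑ i : ↥t, ρ i y • (f y * ((1:A) - g ↑i y)) := by
      simp only [hh, ContinuousMap.coe_sum, Finset.sum_apply, ContinuousMap.mul_apply,
        he, ContinuousMap.coe_mk, smul_mul_assoc, one_mul]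
      have hkey : ∑ i : ↥t, ρ i y • (f y * ((1:A) - g ↑i y)) =
          s • f y - ∑ i : ↥t, ρ i y • (f y * g ↑i y) := by
        rw [hs, Finset.sum_smul, ← Finset.sum_sub_distrib]
        exact Finset.sum_congr rfl fun i _ => by rw [mul_sub, mul_one, smul_sub]
      rw [hkey, sub_smul, one_smul]
      abel
    rw [ContinuousMap.sub_apply, hval]
    have hterm : ∀ i : ↥t, ‖ρ i y • (f y * ((1:A) - g ↑i y))‖ ≤ ρ i y * (‖f‖ * δ) := by
      intro i
      rcases eq_or_lt_of_le (ρ.nonneg i y) with h0 | h0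
      · rw [← h0, zero_smul, norm_zero, zero_mul]
      · have hyU : y ∈ U ↑i := hρ i <| subset_tsupport _ <| Function.mem_support.2 (ne_of_gt h0)
        have h1 : ‖(1:A) - g ↑i y‖ ≤ δ := by
          rw [norm_sub_rev]; exact le_of_lt hyU
        rw [norm_smul, Real.norm_eq_abs, abs_of_nonneg (ρ.nonneg i y)]
        apply mul_le_mul_of_nonneg_left _ (ρ.nonneg i y)
        calc ‖f y * ((1:A) - g ↑i y)‖ ≤ ‖f y‖ * ‖(1:A) - g ↑i y‖ := norm_mul_le _ _
          _ ≤ ‖f‖ * δ := mul_le_mul (f.norm_coe_le_norm y) h1 (norm_nonneg _) (norm_nonneg _)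
    have hsum : ‖∑ i : ↥t, ρ i y • (f y * ((1:A) - g ↑i y))‖ ≤ s * (‖f‖ * δ) := by
      calc ‖∑ i : ↥t, ρ i y • (f y * ((1:A) - g ↑i y))‖
          ≤ ∑ i : ↥t, ‖ρ i y • (f y * ((1:A) - g ↑i y))‖ := norm_sum_le _ _
        _ ≤ ∑ i : ↥t, ρ i y * (‖f‖ * δ) := Finset.sum_le_sum fun i _ => hterm i
        _ = s * (‖f‖ * δ) := by rw [hs, Finset.sum_mul]
    have hfirst : ‖(1 - s) • f y‖ ≤ (1 - s) * ε := by
      by_cases hyK : y ∈ K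
      · rw [hsK hyK]
        simp
      · rw [norm_smul, Real.norm_eq_abs, abs_of_nonneg (by linarith)]
        apply mul_le_mul_of_nonneg_left _ (by linarith)
        have : ¬ ε ≤ ‖f y‖ := hyK
        linarith [not_le.1 this]
    calc ‖(1 - s) • f y + ∑ i : ↥t, ρ i y • (f y * ((1:A) - g ↑i y))‖
        ≤ ‖(1 - s) • f y‖ + ‖∑ i : ↥t, ρ i y • (f y * ((1:A) - g ↑i y))‖ := norm_add_le _ _
      _ ≤ (1 - s) * ε + s * (‖f‖ * δ) := add_le_add hfirst hsum
      _ ≤ (1 - s) * ε + s * ε := by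
          apply add_le_add_right
          exact mul_le_mul_of_nonneg_left hfδ hs0
      _ = ε := by ring
  have : f ∈ closure (I : Set C(X, A)) := by
    rw [Metric.mem_closure_iff]
    intro ε hε
    obtain ⟨h, hhI, hfh⟩ := key (ε/2) (by linarith)
    exact ⟨h, hhI, by rw [dist_eq_norm]; linarith⟩
  rwa [hI.closure_eq] at this

end main

/-- Let `X` be a compact metric space and `A` a unital simple C*-algebra.
For every closed two-sided ideal `I` of `C(X,A)`, setting
`X_I = {x ∈ X : f x = 0 for all f ∈ I}` (a closed subset of `X`), one has
`I = {f ∈ C(X,A) : f x = 0 for all x ∈ X_I}`.  Consequently, the closed two-sided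
ideals of `C(X,A)` are exactly the sets `{f : ∀ x ∈ Y, f x = 0}` for closed `Y ⊆ X`. -/
theorem ideals_of_continuous_functions
    (X : Type*) [MetricSpace X] [CompactSpace X]
    (A : Type*) [NormedRing A] [StarRing A] [CStarRing A] [NormedAlgebra ℂ A]
    [CompleteSpace A] [StarModule ℂ A] [Nontrivial A]
    (hA : ∀ I : TwoSidedIdeal A, IsClosed (I : Set A) → I = ⊥ ∨ I = ⊤) :
    (∀ I : TwoSidedIdeal C(X, A), IsClosed (I : Set C(X, A)) →
      IsClosed {x : X | ∀ f ∈ I, f x = 0} ∧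
      (I : Set C(X, A)) =
        {f : C(X, A) | ∀ x : X, (∀ g ∈ I, g x = 0) → f x = 0}) ∧
    (∀ I : TwoSidedIdeal C(X, A), IsClosed (I : Set C(X, A)) →
      ∃ Y : Set X, IsClosed Y ∧
        (I : Set C(X, A)) = {f : C(X, A) | ∀ x ∈ Y, f x = 0}) ∧
    (∀ Y : Set X, IsClosed Y →
      ∃ I : TwoSidedIdeal C(X, A), IsClosed (I : Set C(X, A)) ∧
        (I : Set C(X, A)) = {f : C(X, A) | ∀ x ∈ Y, f x = 0}) := by
  have hXI : ∀ I : TwoSidedIdeal C(X, A), IsClosed {x : X | ∀ f ∈ I, f x = 0} := by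
    intro I
    have : {x : X | ∀ f ∈ I, f x = 0} = ⋂ f ∈ (I : Set C(X,A)), (fun x => f x) ⁻¹' {0} := by
      ext x; simp
    rw [this]
    exact isClosed_biInter fun f _ => IsClosed.preimage f.continuous isClosed_singleton
  have hmain : ∀ I : TwoSidedIdeal C(X, A), IsClosed (I : Set C(X, A)) →
      (I : Set C(X, A)) = {f : C(X, A) | ∀ x : X, (∀ g ∈ I, g x = 0) → f x = 0} := by
    intro I hI
    apply Set.Subset.antisymm
    · intro f hf x hx
      exact hx f hf
    · intro f hf
      exact mem_of_vanish hA I hI f hf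
  refine ⟨fun I hI => ⟨hXI I, hmain I hI⟩, fun I hI => ?_, fun Y hY => ?_⟩
  · refine ⟨{x : X | ∀ f ∈ I, f x = 0}, hXI I, ?_⟩
    rw [hmain I hI]
    ext f
    simp only [Set.mem_setOf_eq]
  · refine ⟨vanishIdeal Y, ?_, ?_⟩ <;>
      rw [show ((vanishIdeal Y : TwoSidedIdeal C(X,A)) : Set C(X,A)) =
        {f : C(X, A) | ∀ x ∈ Y, f x = 0} from TwoSidedIdeal.coe_mk' _ _ _ _ _ _]
    · exact vanishSet_closed Y
end

section
/- Let X be a compact metric space, let A be a unital simple C*-algebra, and let α be a *-automorphism of C(X,A). Then there exists a homeomorphism σ : X → X such that α(I_x) = I_{σ(x)} for every x ∈ X, where I_x = {f ∈ C(X,A) : f(x) = 0}; equivalently, for every x ∈ X and f ∈ C(X,A), f(x) = 0 if and only if α(f)(σ(x)) = 0. -/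
set_option maxHeartbeats 1000000

section CentralScalar

variable {A : Type*} [CStarAlgebra A] [Nontrivial A]

omit [Nontrivial A] in
/-- Anything in the elemental star algebra of a central element commutes with everything. -/
lemma commute_of_mem_elemental {z : A} (hz : ∀ a : A, a * z = z * a)
    (y : A) {u : A} (hu : u ∈ StarAlgebra.elemental ℂ z) : y * u = u * y := by
  induction hu using StarAlgebra.elemental.induction_on with
  | self => exact hz y
  | star_self =>
    calc y * star z = star (z * star y) := by simp [star_mul]
      _ = star (star y * z) := by rw [hz (star y)]
      _ = star z * y := by simp [star_mul]
  | algebraMap r => exact (Algebra.commutes r y).symm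
  | add u _ v _ h1 h2 => rw [mul_add, add_mul, h1, h2]
  | mul u _ v _ h1 h2 => rw [← mul_assoc, h1, mul_assoc, h2, ← mul_assoc]
  | closure s hs hP v hv =>
    have hsub : s ⊆ {u : A | y * u = u * y} := fun u hu => hP u hu
    have hcl : IsClosed {u : A | y * u = u * y} :=
      isClosed_eq (continuous_const.mul continuous_id) (continuous_id.mul continuous_const)
    exact hcl.closure_subset_iff.mpr hsub hv

/-- In a unital simple C*-algebra, central elements are scalar multiples of the identity. -/
lemma central_eq_smul_one
    (hA : ∀ I : TwoSidedIdeal A, IsClosed (I : Set A) → I = ⊥ ∨ I = ⊤)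
    (z : A) (hz : ∀ a : A, a * z = z * a) : ∃ c : ℂ, z = c • 1 := by
  haveI hzn : IsStarNormal z := ⟨hz (star z)⟩
  by_cases hsub : ∀ s ∈ spectrum ℂ z, ∀ t ∈ spectrum ℂ z, s = t
  · obtain ⟨s, hs⟩ := spectrum.nonempty z
    refine ⟨s, ?_⟩
    set w : A := z - algebraMap ℂ A s with hw
    have hwc : ∀ a : A, a * w = w * a := by
      intro a
      simp only [hw, mul_sub, sub_mul, hz a, Algebra.commutes]
    haveI : IsStarNormal w := ⟨hwc (star w)⟩
    have hws : ∀ x ∈ spectrum ℂ w, x = 0 := by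
      intro x hx
      rw [hw, ← spectrum.sub_singleton_eq] at hx
      obtain ⟨t, ht, u, hu, rfl⟩ := Set.mem_sub.mp hx
      rw [Set.mem_singleton_iff] at hu
      rw [hu, hsub t ht s hs, sub_self]
    have hw0 : w = 0 := by
      have h1 : cfc (id : ℂ → ℂ) w = cfc (fun _ => (0 : ℂ)) w :=
        cfc_congr fun x hx => hws x hx
      calc w = cfc (id : ℂ → ℂ) w := (cfc_id ℂ w).symm
        _ = cfc (fun _ => (0 : ℂ)) w := h1
        _ = 0 := cfc_zero ℂ w
    have : z = algebraMap ℂ A s := by rwa [hw, sub_eq_zero] at hw0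
    rw [this, Algebra.algebraMap_eq_smul_one]
  · exfalso
    push_neg at hsub
    obtain ⟨s, hs, t, ht, hst⟩ := hsub
    set r : ℝ := dist s t / 2 with hr
    have hrpos : 0 < r := half_pos (dist_pos.mpr hst)
    set p : ℂ → ℂ := fun w => ((max 0 (1 - dist w s / r) : ℝ) : ℂ) with hp
    set q : ℂ → ℂ := fun w => ((max 0 (1 - dist w t / r) : ℝ) : ℂ) with hq
    have hpc : Continuous p :=
      Complex.continuous_ofReal.comp
        (continuous_const.max (continuous_const.sub
          ((continuous_id.dist continuous_const).div_const r)))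
    have hqc : Continuous q :=
      Complex.continuous_ofReal.comp
        (continuous_const.max (continuous_const.sub
          ((continuous_id.dist continuous_const).div_const r)))
    have hpq : ∀ w, q w * p w = 0 := by
      intro w
      have htri : 2 * r ≤ dist w s + dist w t := by
        have := dist_triangle s w t
        rw [dist_comm s w] at this
        rw [hr]; linarith
      rcases le_or_gt r (dist w s) with hd | hd
      · have : p w = 0 := by
          have h1 : 1 - dist w s / r ≤ 0 := by
            have : 1 ≤ dist w s / r := (one_le_div hrpos).mpr hd
            linarith
          simp [hp, max_eq_left h1]
        rw [this, mul_zero]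
      · have : q w = 0 := by
          have hd2 : r ≤ dist w t := by linarith
          have h1 : 1 - dist w t / r ≤ 0 := by
            have : 1 ≤ dist w t / r := (one_le_div hrpos).mpr hd2
            linarith
          simp [hq, max_eq_left h1]
        rw [this, zero_mul]
    set a : A := cfc p z with ha
    set b : A := cfc q z with hb
    have hane : a ≠ 0 := by
      intro h0
      have h1 : ‖p s‖ ≤ ‖a‖ := norm_apply_le_norm_cfc p z hs hpc.continuousOn
      have hps : p s = 1 := by simp [hp, dist_self]
      rw [h0, norm_zero, hps, norm_one] at h1
      linarith
    have hbne : b ≠ 0 := by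
      intro h0
      have h1 : ‖q t‖ ≤ ‖b‖ := norm_apply_le_norm_cfc q z ht hqc.continuousOn
      have hqt : q t = 1 := by simp [hq, dist_self]
      rw [h0, norm_zero, hqt, norm_one] at h1
      linarith
    have hbmem : b ∈ StarAlgebra.elemental ℂ z := by
      rw [hb, cfc_apply q z, cfcHom_eq_of_isStarNormal]
      exact SetLike.coe_mem _
    have hbcomm : ∀ y : A, y * b = b * y := fun y => commute_of_mem_elemental hz y hbmem
    have hba : b * a = 0 := by
      rw [ha, hb, ← cfc_mul q p z hqc.continuousOn hpc.continuousOn]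
      calc cfc (fun x => q x * p x) z = cfc (0 : ℂ → ℂ) z := by
            apply cfc_congr; intro x _; exact hpq x
        _ = 0 := cfc_zero ℂ z
    set J : TwoSidedIdeal A := TwoSidedIdeal.mk' {m : A | b * m = 0}
      (by simp)
      (fun {x y} hx hy => by
        simp only [Set.mem_setOf_eq] at *
        rw [mul_add, hx, hy, add_zero])
      (fun {x} hx => by
        simp only [Set.mem_setOf_eq] at *
        rw [mul_neg, hx, neg_zero])
      (fun {x y} hy => by
        simp only [Set.mem_setOf_eq] at *
        rw [← mul_assoc, ← hbcomm x, mul_assoc, hy, mul_zero])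
      (fun {x y} hx => by
        simp only [Set.mem_setOf_eq] at *
        rw [← mul_assoc, hx, zero_mul]) with hJ
    have hJc : IsClosed (J : Set A) := by
      rw [hJ, TwoSidedIdeal.coe_mk']
      have : {m : A | b * m = 0} = (fun m => b * m) ⁻¹' {0} := by ext m; simp
      rw [this]
      exact isClosed_singleton.preimage (continuous_const.mul continuous_id)
    rcases hA J hJc with h | h
    · have : a ∈ J := by
        rw [hJ, TwoSidedIdeal.mem_mk']
        exact hba
      rw [h, TwoSidedIdeal.mem_bot] at this
      exact hane this
    · have : (1 : A) ∈ J := by rw [h]; exact TwoSidedIdeal.mem_top A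
      rw [hJ, TwoSidedIdeal.mem_mk', Set.mem_setOf_eq, mul_one] at this
      exact hbne this

end CentralScalar

section Main

variable {X : Type*} [MetricSpace X] [CompactSpace X]
variable {A : Type*} [CStarAlgebra A] [Nontrivial A]

/-- The canonical embedding `C(X,ℂ) →⋆ₐ C(X,A)`. -/
noncomputable def iotaCM (X : Type*) [TopologicalSpace X] (A : Type*) [CStarAlgebra A] :
    C(X, ℂ) →⋆ₐ[ℂ] C(X, A) :=
  ContinuousMap.compStarAlgHom X (StarAlgHom.ofId ℂ A) (continuous_algebraMap ℂ A)

lemma iotaCM_apply {X : Type*} [TopologicalSpace X] {A : Type*} [CStarAlgebra A]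
    (h : C(X, ℂ)) (y : X) : iotaCM X A h y = h y • 1 := by
  simp [iotaCM, ContinuousMap.compStarAlgHom, StarAlgHom.ofId,
    Algebra.algebraMap_eq_smul_one]
  exact Algebra.algebraMap_eq_smul_one (h y)

theorem main_aux
    (hA : ∀ I : TwoSidedIdeal A, IsClosed (I : Set A) → I = ⊥ ∨ I = ⊤)
    (α : C(X, A) ≃⋆ₐ[ℂ] C(X, A)) :
    ∃ σ : X ≃ₜ X, ∀ (x : X) (f : C(X, A)), f x = 0 ↔ α f (σ x) = 0 := by
  classical
  obtain ⟨φ, -, hφ1'⟩ := exists_dual_vector ℂ (1 : A) (by rw [norm_one]; exact one_ne_zero)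
  have hφ1 : φ 1 = 1 := by rw [hφ1', norm_one]; norm_num
  set ι : C(X, ℂ) →⋆ₐ[ℂ] C(X, A) := iotaCM X A with hι
  -- central elements of C(X,A) are pointwise scalar
  have hcent : ∀ f : C(X, A), (∀ g : C(X, A), g * f = f * g) →
      ∀ y : X, f y = φ (f y) • 1 := by
    intro f hf y
    obtain ⟨c, hc⟩ := central_eq_smul_one hA (f y) (fun a => by
      have h1 := congrFun (congrArg DFunLike.coe (hf (ContinuousMap.const X a))) y
      simpa using h1)
    rw [hc, map_smul, hφ1, smul_eq_mul, mul_one]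
  -- ι h is central
  have hιcent : ∀ (h : C(X, ℂ)) (g : C(X, A)), g * ι h = ι h * g := by
    intro h g
    ext y
    simp only [ContinuousMap.mul_apply, iotaCM_apply, hι]
    rw [mul_smul_comm, smul_mul_assoc, mul_one, one_mul]
  have hιinj : Function.Injective ι := by
    intro h1 h2 hh
    ext y
    have h3 := congrFun (congrArg DFunLike.coe hh) y
    rw [iotaCM_apply, iotaCM_apply] at h3
    have h4 := congrArg φ h3
    rwa [map_smul, map_smul, hφ1, smul_eq_mul, smul_eq_mul, mul_one, mul_one] at h4
  -- The scalar-extraction map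
  set E : C(X, A) → C(X, ℂ) := fun f => ⟨fun y => φ (f y), φ.continuous.comp f.continuous⟩
    with hE
  have hEapply : ∀ (f : C(X, A)) (y : X), E f y = φ (f y) := fun _ _ => rfl
  have hEι : ∀ h : C(X, ℂ), E (ι h) = h := by
    intro h
    ext y
    rw [hEapply, iotaCM_apply, map_smul, hφ1, smul_eq_mul, mul_one]
  -- For any automorphism γ, γ ∘ ι has pointwise scalar values
  have hcentγ : ∀ (γ : C(X, A) ≃⋆ₐ[ℂ] C(X, A)) (h : C(X, ℂ)),
      ι (E (γ (ι h))) = γ (ι h) := by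
    intro γ h
    have hγc : ∀ g : C(X, A), g * γ (ι h) = γ (ι h) * g := by
      intro g
      have := congrArg γ (hιcent h (γ.symm g))
      rwa [map_mul, map_mul, γ.apply_symm_apply] at this
    ext y
    rw [iotaCM_apply, hEapply]
    exact (hcent _ hγc y).symm
  -- Construct β (for α) and β' (for α.symm) as star algebra homs of C(X,ℂ)
  have mkβ : ∀ γ : C(X, A) ≃⋆ₐ[ℂ] C(X, A),
      ∃ β : C(X, ℂ) →⋆ₐ[ℂ] C(X, ℂ), ∀ h, ι (β h) = γ (ι h) := by
    intro γ
    refine ⟨{ toFun := fun h => E (γ (ι h))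
              map_one' := hιinj ?_
              map_mul' := fun h1 h2 => hιinj ?_
              map_zero' := hιinj ?_
              map_add' := fun h1 h2 => hιinj ?_
              commutes' := fun c => hιinj ?_
              map_star' := fun h => hιinj ?_ }, fun h => hcentγ γ h⟩
    · rw [hcentγ, map_one ι, map_one γ]
    · calc ι (E (γ (ι (h1 * h2)))) = γ (ι (h1 * h2)) := hcentγ γ _
        _ = γ (ι h1) * γ (ι h2) := by rw [map_mul ι, map_mul γ]
        _ = ι (E (γ (ι h1))) * ι (E (γ (ι h2))) := by rw [hcentγ, hcentγ]
        _ = ι (E (γ (ι h1)) * E (γ (ι h2))) := (map_mul ι _ _).symm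
    · rw [hcentγ, map_zero ι, map_zero γ]
    · calc ι (E (γ (ι (h1 + h2)))) = γ (ι (h1 + h2)) := hcentγ γ _
        _ = γ (ι h1) + γ (ι h2) := by rw [map_add ι, map_add γ]
        _ = ι (E (γ (ι h1))) + ι (E (γ (ι h2))) := by rw [hcentγ, hcentγ]
        _ = ι (E (γ (ι h1)) + E (γ (ι h2))) := (map_add ι _ _).symm
    · rw [hcentγ, AlgHomClass.commutes ι, AlgHomClass.commutes γ]
    · calc ι (E (γ (ι (star h)))) = γ (ι (star h)) := hcentγ γ _
        _ = γ (star (ι h)) := by rw [map_star]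
        _ = star (γ (ι h)) := map_star γ _
        _ = star (ι (E (γ (ι h)))) := by rw [hcentγ]
        _ = ι (star (E (γ (ι h)))) := (map_star ι _).symm
  obtain ⟨β, hβ⟩ := mkβ α
  obtain ⟨β', hβ'⟩ := mkβ α.symm
  -- β and β' are mutually inverse
  have hββ' : ∀ h, β' (β h) = h := by
    intro h
    apply hιinj
    rw [hβ', hβ, α.symm_apply_apply]
  have hβ'β : ∀ h, β (β' h) = h := by
    intro h
    apply hιinj
    rw [hβ, hβ', α.apply_symm_apply]
  -- the induced maps on X via the character space
  set homeo := WeakDual.CharacterSpace.homeoEval X ℂ with hhomeo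
  set sfun : X → X :=
    fun x => homeo.symm (WeakDual.CharacterSpace.compContinuousMap β' (homeo x)) with hsfun
  set tfun : X → X :=
    fun x => homeo.symm (WeakDual.CharacterSpace.compContinuousMap β (homeo x)) with htfun
  have happly : ∀ (x : X) (h : C(X, ℂ)), (homeo x) h = h x := fun _ _ => rfl
  have hs_eq : ∀ (h : C(X, ℂ)) (x : X), h (sfun x) = β' h x := by
    intro h x
    have h1 : homeo (sfun x) = WeakDual.CharacterSpace.compContinuousMap β' (homeo x) := by
      rw [hsfun]; exact homeo.apply_symm_apply _
    have h2 := congrArg (fun χ : WeakDual.characterSpace ℂ C(X, ℂ) => χ h) h1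
    simpa [happly] using h2
  have ht_eq : ∀ (h : C(X, ℂ)) (x : X), h (tfun x) = β h x := by
    intro h x
    have h1 : homeo (tfun x) = WeakDual.CharacterSpace.compContinuousMap β (homeo x) := by
      rw [htfun]; exact homeo.apply_symm_apply _
    have h2 := congrArg (fun χ : WeakDual.characterSpace ℂ C(X, ℂ) => χ h) h1
    simpa [happly] using h2
  have hβs : ∀ (h : C(X, ℂ)) (x : X), β h (sfun x) = h x := by
    intro h x
    rw [hs_eq (β h) x, hββ']
  have hβ't : ∀ (h : C(X, ℂ)) (x : X), β' h (tfun x) = h x := by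
    intro h x
    rw [ht_eq (β' h) x, hβ'β]
  have hts : ∀ x, tfun (sfun x) = x := by
    intro x
    apply homeo.injective
    apply WeakDual.CharacterSpace.ext
    intro h
    rw [happly, happly, ht_eq, hβs]
  have hst : ∀ x, sfun (tfun x) = x := by
    intro x
    apply homeo.injective
    apply WeakDual.CharacterSpace.ext
    intro h
    rw [happly, happly, hs_eq, hβ't]
  have hscont : Continuous sfun := by
    rw [hsfun]
    exact homeo.symm.continuous.comp
      ((WeakDual.CharacterSpace.compContinuousMap β').continuous.comp homeo.continuous)
  have htcont : Continuous tfun := by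
    rw [htfun]
    exact homeo.symm.continuous.comp
      ((WeakDual.CharacterSpace.compContinuousMap β).continuous.comp homeo.continuous)
  -- the key one-directional lemma
  have key : ∀ (γ : C(X, A) ≃⋆ₐ[ℂ] C(X, A)) (s : X → X),
      (∀ (h : C(X, ℂ)) (x : X), γ (ι h) (s x) = h x • 1) →
      ∀ (f : C(X, A)) (x : X), f x = 0 → γ f (s x) = 0 := by
    intro γ s hγs f x hfx
    have hbound : ∀ ε : ℝ, 0 < ε → ‖γ f (s x)‖ ≤ ε := by
      intro ε hε
      obtain ⟨δ, hδ, hδf⟩ := Metric.continuousAt_iff.mp f.continuous.continuousAt ε hε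
      set h : C(X, ℂ) := ⟨fun y => ((min 1 (dist y x / δ) : ℝ) : ℂ),
        Complex.continuous_ofReal.comp
          (continuous_const.min ((continuous_id.dist continuous_const).div_const δ))⟩ with hh
      have hhy : ∀ y : X, h y = ((min 1 (dist y x / δ) : ℝ) : ℂ) := fun _ => rfl
      have hhx : h x = 0 := by
        rw [hhy, dist_self, zero_div, min_eq_right (by norm_num : (0:ℝ) ≤ 1), Complex.ofReal_zero]
      have hγh : γ (ι h) (s x) = 0 := by
        rw [hγs h x, hhx, zero_smul]
      have hnorm : ‖f - ι h * f‖ ≤ ε := by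
        rw [ContinuousMap.norm_le _ hε.le]
        intro y
        rw [ContinuousMap.sub_apply, ContinuousMap.mul_apply, iotaCM_apply, smul_mul_assoc,
          one_mul]
        rcases le_or_gt δ (dist y x) with hy | hy
        · have hmin : min 1 (dist y x / δ) = 1 := min_eq_left ((one_le_div hδ).mpr hy)
          rw [hhy, hmin, Complex.ofReal_one, one_smul, sub_self, norm_zero]
          exact hε.le
        · have hfy : ‖f y‖ < ε := by
            have := hδf hy
            rwa [hfx, dist_zero_right] at this
          have h0 : (0:ℝ) ≤ min 1 (dist y x / δ) :=
            le_min zero_le_one (div_nonneg dist_nonneg hδ.le)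
          have h1 : min 1 (dist y x / δ) ≤ 1 := min_le_left _ _
          calc ‖f y - h y • f y‖ = ‖((1 : ℂ) - h y) • f y‖ := by rw [sub_smul, one_smul]
            _ = ‖(1 : ℂ) - h y‖ * ‖f y‖ := norm_smul _ _
            _ ≤ 1 * ε := by
                apply mul_le_mul _ hfy.le (norm_nonneg _) zero_le_one
                rw [hhy, ← Complex.ofReal_one, ← Complex.ofReal_sub, Complex.norm_real,
                  Real.norm_eq_abs, abs_of_nonneg (by linarith)]
                linarith
            _ = ε := one_mul ε
      calc ‖γ f (s x)‖ = ‖(γ f - γ (ι h * f)) (s x)‖ := by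
            rw [ContinuousMap.sub_apply, map_mul, ContinuousMap.mul_apply, hγh, zero_mul,
              sub_zero]
        _ ≤ ‖γ f - γ (ι h * f)‖ := ContinuousMap.norm_coe_le_norm _ _
        _ = ‖f - ι h * f‖ := by rw [← map_sub]; exact StarAlgEquiv.norm_map γ _
        _ ≤ ε := hnorm
    have hle : ‖γ f (s x)‖ ≤ 0 :=
      le_of_forall_pos_le_add (fun ε hε => by simpa using hbound ε hε)
    exact norm_le_zero_iff.mp hle
  have hαs : ∀ (h : C(X, ℂ)) (x : X), α (ι h) (sfun x) = h x • 1 := by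
    intro h x
    rw [← hβ, iotaCM_apply, hβs]
  have hα't : ∀ (h : C(X, ℂ)) (x : X), α.symm (ι h) (tfun x) = h x • 1 := by
    intro h x
    rw [← hβ', iotaCM_apply, hβ't]
  refine ⟨⟨⟨sfun, tfun, hts, hst⟩, hscont, htcont⟩, fun x f => ⟨fun hf => ?_, fun hf => ?_⟩⟩
  · exact key α sfun hαs f x hf
  · have := key α.symm tfun hα't (α f) (sfun x) hf
    rwa [α.symm_apply_apply, hts x] at this

end Main

/-- Let `X` be a compact metric space, `A` a unital simple C*-algebra and
`α` a *-automorphism of `C(X,A)`.  Then there exists a homeomorphism `σ : X → X` such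
that `α(I_x) = I_{σ(x)}` for every `x ∈ X`; equivalently, for every `x ∈ X` and
`f ∈ C(X,A)`, `f x = 0` iff `α f (σ x) = 0`. -/
theorem automorphism_induces_homeomorphism
    (X : Type*) [MetricSpace X] [CompactSpace X]
    (A : Type*) [NormedRing A] [StarRing A] [CStarRing A] [NormedAlgebra ℂ A]
    [CompleteSpace A] [StarModule ℂ A] [Nontrivial A]
    (hA : ∀ I : TwoSidedIdeal A, IsClosed (I : Set A) → I = ⊥ ∨ I = ⊤)
    (α : C(X, A) ≃⋆ₐ[ℂ] C(X, A)) :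
    ∃ σ : X ≃ₜ X, ∀ (x : X) (f : C(X, A)), f x = 0 ↔ α f (σ x) = 0 := by
  letI : CStarAlgebra A :=
    { ‹NormedRing A›, ‹StarRing A›, ‹CStarRing A›, ‹NormedAlgebra ℂ A›, ‹StarModule ℂ A›,
      ‹CompleteSpace A› with }
  exact main_aux hA α
end

section
/- Let X be a compact metric space, let A be a unital simple C*-algebra, let α be a *-automorphism of C(X,A), and let σ : X → X be a homeomorphism with α(I_x) = I_{σ(x)} for all x ∈ X. For each x ∈ X define β_x : A → A by β_x(a) = α(â)(σ(x)), where â ∈ C(X,A) is the constant function with value a. Then: (i) each β_x is a *-automorphism of A; (ii) α(f)(y) = β_{σ^{-1}(y)}(f(σ^{-1}(y))) for every f ∈ C(X,A) and y ∈ X; (iii) for each a ∈ A the map x ↦ β_x(a) is continuous from X to A. -/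
/-- Let `X` be a compact metric space, `A` a unital simple C*-algebra,
`α` a *-automorphism of `C(X,A)`, and `σ : X → X` a homeomorphism with
`α(I_x) = I_{σ(x)}` for all `x`.  For each `x` define `β_x : A → A` by
`β_x a = α (const a) (σ x)`.  Then (i) each `β_x` is a *-automorphism of `A`,
(ii) `α f y = β_{σ⁻¹ y} (f (σ⁻¹ y))` for all `f` and `y`, and (iii) for each `a ∈ A`
the map `x ↦ β_x a` is continuous. -/
theorem fiber_automorphisms
    (X : Type*) [MetricSpace X] [CompactSpace X]
    (A : Type*) [NormedRing A] [StarRing A] [CStarRing A] [NormedAlgebra ℂ A]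
    [CompleteSpace A] [StarModule ℂ A] [Nontrivial A]
    (hA : ∀ I : TwoSidedIdeal A, IsClosed (I : Set A) → I = ⊥ ∨ I = ⊤)
    (α : C(X, A) ≃⋆ₐ[ℂ] C(X, A)) (σ : X ≃ₜ X)
    (hσ : ∀ (x : X) (f : C(X, A)), f x = 0 ↔ α f (σ x) = 0) :
    ∃ β : X → (A ≃⋆ₐ[ℂ] A),
      (∀ (x : X) (a : A), β x a = α (ContinuousMap.const X a) (σ x)) ∧
      (∀ (f : C(X, A)) (y : X), α f y = β (σ.symm y) (f (σ.symm y))) ∧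
      (∀ a : A, Continuous fun x : X => β x a) := by
  have key : ∀ (f : C(X, A)) (x : X),
      α (ContinuousMap.const X (f x)) (σ x) = α f (σ x) := by
    intro f x
    have h : (ContinuousMap.const X (f x) - f) x = 0 := by simp
    have h2 := (hσ x _).mp h
    rw [map_sub] at h2
    simpa [ContinuousMap.sub_apply, sub_eq_zero] using h2
  have key2 : ∀ (g : C(X, A)) (x : X),
      α.symm (ContinuousMap.const X (g (σ x))) x = α.symm g x := by
    intro g x
    have h : α (α.symm (ContinuousMap.const X (g (σ x))) - α.symm g) (σ x) = 0 := by
      rw [map_sub, StarAlgEquiv.apply_symm_apply, StarAlgEquiv.apply_symm_apply]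
      simp
    have h2 := (hσ x _).mpr h
    simpa [ContinuousMap.sub_apply, sub_eq_zero] using h2
  refine ⟨fun x =>
    { toFun := fun a => α (ContinuousMap.const X a) (σ x)
      invFun := fun b => α.symm (ContinuousMap.const X b) x
      left_inv := ?_
      right_inv := ?_
      map_mul' := ?_
      map_add' := ?_
      map_star' := ?_
      map_smul' := ?_ }, fun x a => rfl, ?_, ?_⟩
  · intro a
    have := key2 (α (ContinuousMap.const X a)) x
    simpa using this
  · intro b
    have := key (α.symm (ContinuousMap.const X b)) x
    simpa using this
  · intro a b
    show α (ContinuousMap.const X (a * b)) (σ x)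
        = α (ContinuousMap.const X a) (σ x) * α (ContinuousMap.const X b) (σ x)
    rw [show ContinuousMap.const X (a * b)
        = ContinuousMap.const X a * ContinuousMap.const X b from rfl, map_mul]
    rfl
  · intro a b
    show α (ContinuousMap.const X (a + b)) (σ x)
        = α (ContinuousMap.const X a) (σ x) + α (ContinuousMap.const X b) (σ x)
    rw [show ContinuousMap.const X (a + b)
        = ContinuousMap.const X a + ContinuousMap.const X b from rfl, map_add]
    rfl
  · intro a
    show α (ContinuousMap.const X (star a)) (σ x)
        = star (α (ContinuousMap.const X a) (σ x))
    rw [show ContinuousMap.const X (star a)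
        = star (ContinuousMap.const X a) from rfl, map_star]
    rfl
  · intro c a
    show α (ContinuousMap.const X (c • a)) (σ x)
        = c • α (ContinuousMap.const X a) (σ x)
    rw [show ContinuousMap.const X (c • a)
        = c • ContinuousMap.const X a from rfl, map_smul]
    rfl
  · intro f y
    have h := key f (σ.symm y)
    simpa [σ.apply_symm_apply] using h.symm
  · intro a
    exact (α (ContinuousMap.const X a)).continuous.comp σ.continuous
end

section
/- Let X be a compact metric space, let A be a unital simple C*-algebra, and let α be a *-automorphism of C(X,A). If C(X,A) is α-simple, then there exist a minimal homeomorphism σ : X → X and a strongly continuous map β from X to the *-automorphisms of A such that α(f)(x) = β_{σ^{-1}(x)}(f(σ^{-1}(x))) for every f ∈ C(X,A) and every x ∈ X. -/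
lemma central_scalar {A : Type*} [NormedRing A] [NormedAlgebra ℂ A]
    [CompleteSpace A] [Nontrivial A]
    (hA : ∀ I : TwoSidedIdeal A, IsClosed (I : Set A) → I = ⊥ ∨ I = ⊤)
    (z : A) (hz : ∀ a, z * a = a * z) : ∃ c : ℂ, z = c • 1 := by
  obtain ⟨lam, hlam⟩ := spectrum.nonempty z
  rw [spectrum.mem_iff] at hlam
  set w : A := algebraMap ℂ A lam - z with hw
  have hwc : ∀ a, w * a = a * w := by
    intro a
    simp only [hw, sub_mul, mul_sub, hz a, Algebra.commutes]
  refine ⟨lam, ?_⟩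
  set J : Submodule ℂ A := (LinearMap.range (LinearMap.mulLeft ℂ w)).topologicalClosure with hJ
  have hJS : (J : Set A) = closure (Set.range fun a => w * a) := by
    rw [hJ, Submodule.topologicalClosure_coe, LinearMap.coe_range]
    rfl
  have hmemS : ∀ a, w * a ∈ (J : Set A) := by
    intro a
    rw [hJS]
    exact subset_closure ⟨a, rfl⟩
  set I : TwoSidedIdeal A := TwoSidedIdeal.mk' (J : Set A)
    J.zero_mem
    (fun hx hy => J.add_mem hx hy)
    (fun hx => J.neg_mem hx)
    (by
      intro x y hy
      rw [hJS] at hy ⊢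
      have hmaps : Set.MapsTo (fun b => x * b) (Set.range fun a => w * a)
          (Set.range fun a => w * a) := by
        rintro _ ⟨a, rfl⟩
        refine ⟨x * a, ?_⟩
        show w * (x * a) = x * (w * a)
        rw [← mul_assoc, hwc x, mul_assoc]
      exact hmaps.closure (continuous_mul_left x) hy)
    (by
      intro x y hx
      rw [hJS] at hx ⊢
      have hmaps : Set.MapsTo (fun b => b * y) (Set.range fun a => w * a)
          (Set.range fun a => w * a) := by
        rintro _ ⟨a, rfl⟩
        refine ⟨a * y, ?_⟩
        show w * (a * y) = (w * a) * y
        rw [mul_assoc]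
      exact hmaps.closure (continuous_mul_right y) hx) with hI
  have hIco : (I : Set A) = (J : Set A) := TwoSidedIdeal.coe_mk' _ _ _ _ _ _
  have hIclosed : IsClosed (I : Set A) := by
    rw [hIco, hJS]; exact isClosed_closure
  have hImem : ∀ x, x ∈ I ↔ x ∈ (J : Set A) := fun x =>
    TwoSidedIdeal.mem_mk' _ _ _ _ _ _ x
  rcases hA I hIclosed with hbot | htop
  · have hwI : w ∈ I := by
      rw [hImem]
      simpa using hmemS 1
    rw [hbot, TwoSidedIdeal.mem_bot] at hwI
    rw [hw, sub_eq_zero] at hwI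
    rw [← hwI, Algebra.algebraMap_eq_smul_one]
  · have h1 : (1 : A) ∈ closure (Set.range fun a => w * a) := by
      have h1' : (1 : A) ∈ I := htop ▸ TwoSidedIdeal.mem_top A
      rw [hImem, hJS] at h1'
      exact h1'
    rw [Metric.mem_closure_iff] at h1
    obtain ⟨b, ⟨a, rfl⟩, hb⟩ := h1 1 one_pos
    have hu : IsUnit (w * a) := by
      have := isUnit_one_sub_of_norm_lt_one (x := 1 - w * a)
        (by rw [← dist_eq_norm]; exact hb)
      simpa using this
    obtain ⟨u, hu⟩ := hu
    have hwu : IsUnit w := by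
      refine ⟨⟨w, a * ↑u⁻¹, ?_, ?_⟩, rfl⟩
      · rw [← mul_assoc, ← hu, u.mul_inv]
      · calc a * ↑u⁻¹ * w = a * (w * ↑u⁻¹) := by rw [mul_assoc, ← hwc]
          _ = w * a * ↑u⁻¹ := by rw [← mul_assoc, ← hwc, mul_assoc]
          _ = 1 := by rw [← hu, u.mul_inv]
    exact absurd hwu hlam

/-- Localization: `α f x` only depends on `f (s x)`. -/
lemma alpha_loc
    (X : Type*) [MetricSpace X] [CompactSpace X] [Nonempty X]
    (A : Type*) [NormedRing A] [StarRing A] [CStarRing A] [NormedAlgebra ℂ A]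
    [CompleteSpace A] [StarModule ℂ A] [Nontrivial A]
    (α : C(X, A) ≃⋆ₐ[ℂ] C(X, A)) (s : X → X)
    (hs : ∀ (g : C(X, ℂ)) (x : X),
      α ⟨fun y => g y • 1, g.continuous.smul continuous_const⟩ x = g (s x) • 1)
    (f : C(X, A)) (x : X) (hf : f (s x) = 0) : α f x = 0 := by
  letI : CStarAlgebra A := { }
  have hnorm : ∀ h : C(X, A), ‖α h‖ = ‖h‖ := fun h => StarAlgEquiv.norm_map α h
  rw [← norm_le_zero_iff]
  refine le_of_forall_pos_le_add fun ε hε => ?_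
  rw [zero_add]
  obtain ⟨δ, hδ, hδf⟩ := Metric.continuousAt_iff.mp (f.continuous.continuousAt (x := s x)) ε hε
  set r : C(X, ℝ) := ⟨fun y => min 1 (dist y (s x) / δ),
    continuous_const.min ((continuous_id.dist continuous_const).div_const δ)⟩ with hr
  set g : C(X, ℂ) := ⟨fun y => (r y : ℂ), Complex.continuous_ofReal.comp r.continuous⟩ with hg
  set G : C(X, A) := ⟨fun y => g y • 1, g.continuous.smul continuous_const⟩ with hG
  have hr01 : ∀ y, 0 ≤ r y ∧ r y ≤ 1 := by
    intro y
    constructor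
    · exact le_min zero_le_one (div_nonneg dist_nonneg hδ.le)
    · exact min_le_left _ _
  have hbound : ‖f - G * f‖ ≤ ε := by
    refine (ContinuousMap.norm_le _ hε.le).mpr ?_
    intro y
    have hy : (f - G * f) y = (1 - g y) • f y := by
      simp only [ContinuousMap.sub_apply, ContinuousMap.mul_apply, hG, ContinuousMap.coe_mk]
      rw [smul_mul_assoc, one_mul, sub_smul, one_smul]
    rw [hy, norm_smul]
    rcases le_or_gt δ (dist y (s x)) with h | h
    · have hry : r y = 1 := min_eq_left (by rw [le_div_iff₀ hδ]; linarith)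
      have : (1 : ℂ) - g y = 0 := by
        simp [hg, hry]
      rw [this]
      simp [hε.le]
    · have h1 : ‖f y‖ ≤ ε := by
        have := hδf h
        rw [hf, dist_zero_right] at this
        exact this.le
      have h2 : ‖(1 : ℂ) - g y‖ ≤ 1 := by
        have h0 := (hr01 y).1
        have h1' := (hr01 y).2
        have : (1 : ℂ) - g y = ((1 - r y : ℝ) : ℂ) := by
          simp [hg]
        rw [this, Complex.norm_real, Real.norm_eq_abs, abs_of_nonneg (by linarith)]
        linarith
      calc ‖1 - g y‖ * ‖f y‖ ≤ 1 * ε :=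
            mul_le_mul h2 h1 (norm_nonneg _) one_pos.le
        _ = ε := one_mul ε
  have hzero : α (G * f) x = 0 := by
    rw [map_mul]
    rw [ContinuousMap.mul_apply]
    have hGs : α G x = g (s x) • 1 := hs g x
    have hgsx : g (s x) = 0 := by
      simp [hg, hr]
    rw [hGs, hgsx, zero_smul, zero_mul]
  have heq : α f x = α (f - G * f) x := by
    rw [map_sub, ContinuousMap.sub_apply, hzero, sub_zero]
  rw [heq]
  calc ‖α (f - G * f) x‖ ≤ ‖α (f - G * f)‖ := ContinuousMap.norm_coe_le_norm _ _
    _ = ‖f - G * f‖ := hnorm _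
    _ ≤ ε := hbound
/-- From an automorphism of `C(X,A)` (with `A` simple) we extract a continuous point map. -/
lemma exists_point_map
    (X : Type*) [MetricSpace X] [CompactSpace X] [Nonempty X]
    (A : Type*) [NormedRing A] [StarRing A] [CStarRing A] [NormedAlgebra ℂ A]
    [CompleteSpace A] [StarModule ℂ A] [Nontrivial A]
    (hA : ∀ I : TwoSidedIdeal A, IsClosed (I : Set A) → I = ⊥ ∨ I = ⊤)
    (α : C(X, A) ≃⋆ₐ[ℂ] C(X, A)) :
    ∃ s : X → X, Continuous s ∧ ∀ (g : C(X, ℂ)) (x : X),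
      α ⟨fun y => g y • 1, g.continuous.smul continuous_const⟩ x = g (s x) • 1 := by
  letI : CStarAlgebra A := { }
  have hnorm : ∀ h : C(X, A), ‖α h‖ = ‖h‖ := fun h => StarAlgEquiv.norm_map α h
  obtain ⟨φ, hφn, hφ1⟩ := exists_dual_vector ℂ (1 : A) (norm_ne_zero_iff.mpr one_ne_zero)
  have hφone : φ (1 : A) = 1 := by
    rw [hφ1]
    simp
  have hφsmul : ∀ c : ℂ, φ (c • (1 : A)) = c := by
    intro c
    rw [map_smul, hφone, smul_eq_mul, mul_one]
  set ι : C(X, ℂ) → C(X, A) :=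
    fun g => ⟨fun y => g y • 1, g.continuous.smul continuous_const⟩ with hι
  -- `α (ι g)` is central, hence pointwise a scalar
  have hcent : ∀ (g : C(X, ℂ)) (x : X) (a : A), α (ι g) x * a = a * α (ι g) x := by
    intro g x a
    have hgc : ∀ b : C(X, A), ι g * b = b * ι g := by
      intro b
      ext y
      simp only [ContinuousMap.mul_apply, hι, ContinuousMap.coe_mk]
      rw [smul_mul_assoc, one_mul, mul_smul_comm, mul_one]
    have h1 : α (ι g) * ContinuousMap.const X a = ContinuousMap.const X a * α (ι g) := by
      have := congrArg α (hgc (α.symm (ContinuousMap.const X a)))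
      rw [map_mul, map_mul, StarAlgEquiv.apply_symm_apply] at this
      exact this
    have := congrArg (fun F : C(X, A) => F x) h1
    simpa only [ContinuousMap.mul_apply, ContinuousMap.const_apply] using this
  have hT : ∀ (g : C(X, ℂ)) (x : X), α (ι g) x = φ (α (ι g) x) • 1 := by
    intro g x
    obtain ⟨c, hc⟩ := central_scalar hA _ (hcent g x)
    rw [hc, hφsmul]
  have hι1 : ι (1 : C(X, ℂ)) = 1 := by
    ext y
    simp [hι]
  have hιadd : ∀ g h : C(X, ℂ), ι (g + h) = ι g + ι h := by
    intro g h
    ext y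
    simp [hι, add_smul]
  have hιsmul : ∀ (c : ℂ) (g : C(X, ℂ)), ι (c • g) = c • ι g := by
    intro c g
    ext y
    simp [hι, mul_smul]
  have hιmul : ∀ g h : C(X, ℂ), ι (g * h) = ι g * ι h := by
    intro g h
    ext y
    simp only [hι, ContinuousMap.coe_mk, ContinuousMap.mul_apply]
    rw [smul_mul_assoc, one_mul, smul_smul]
  -- the linear functional `g ↦ φ (α (ι g) x)`
  set L : X → (C(X, ℂ) →ₗ[ℂ] ℂ) := fun x =>
    { toFun := fun g => φ (α (ι g) x)
      map_add' := by
        intro g h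
        show φ (α (ι (g + h)) x) = φ (α (ι g) x) + φ (α (ι h) x)
        rw [hιadd, map_add, ContinuousMap.add_apply, map_add]
      map_smul' := by
        intro c g
        show φ (α (ι (c • g)) x) = c • φ (α (ι g) x)
        rw [hιsmul, map_smul, ContinuousMap.smul_apply, map_smul] } with hL
  have hLbound : ∀ (x : X) (g : C(X, ℂ)), ‖L x g‖ ≤ 1 * ‖g‖ := by
    intro x g
    have h1 : ‖L x g‖ ≤ ‖φ‖ * ‖α (ι g) x‖ := φ.le_opNorm _
    have h2 : ‖α (ι g) x‖ ≤ ‖α (ι g)‖ := ContinuousMap.norm_coe_le_norm _ _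
    have h3 : ‖α (ι g)‖ = ‖ι g‖ := hnorm _
    have h4 : ‖ι g‖ ≤ ‖g‖ := by
      refine (ContinuousMap.norm_le _ (norm_nonneg g)).mpr ?_
      intro y
      show ‖g y • (1 : A)‖ ≤ ‖g‖
      rw [norm_smul, norm_one, mul_one]
      exact ContinuousMap.norm_coe_le_norm g y
    rw [hφn] at h1
    calc ‖L x g‖ ≤ 1 * ‖α (ι g) x‖ := h1
      _ ≤ 1 * ‖g‖ := by rw [one_mul, one_mul]; exact h2.trans (h3.le.trans h4)
  have hLmul : ∀ (x : X) (g h : C(X, ℂ)), L x (g * h) = L x g * L x h := by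
    intro x g h
    have e1 : α (ι (g * h)) x = (φ (α (ι g) x) * φ (α (ι h) x)) • 1 := by
      rw [hιmul, map_mul, ContinuousMap.mul_apply, hT g x, hT h x,
        smul_mul_assoc, one_mul, smul_smul, hφsmul, hφsmul]
    show φ (α (ι (g * h)) x) = _
    rw [e1, hφsmul]
    rfl
  have hLone : ∀ x : X, L x 1 = 1 := by
    intro x
    show φ (α (ι 1) x) = 1
    rw [hι1, map_one, ContinuousMap.one_apply, hφone]
  -- the associated characters
  set χ : X → WeakDual.characterSpace ℂ C(X, ℂ) := fun x =>
    ⟨LinearMap.mkContinuous (L x) 1 (hLbound x), by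
      constructor
      · intro h0
        have h1 : L x 1 = 0 := by
          have := congrArg (fun ψ : WeakDual ℂ C(X, ℂ) => ψ (1 : C(X, ℂ))) h0
          exact this
        rw [hLone x] at h1
        exact one_ne_zero h1
      · intro g h
        exact hLmul x g h⟩ with hχ
  have hχcont : Continuous χ := by
    refine Continuous.subtype_mk ?_ _
    refine WeakDual.continuous_of_continuous_eval ?_
    intro g
    show Continuous fun x => φ (α (ι g) x)
    exact φ.continuous.comp (α (ι g)).continuous
  set s : X → X := fun x => (WeakDual.CharacterSpace.homeoEval X ℂ).symm (χ x) with hsdef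
  refine ⟨s, (WeakDual.CharacterSpace.homeoEval X ℂ).symm.continuous.comp hχcont, ?_⟩
  intro g x
  have h1 : WeakDual.CharacterSpace.homeoEval X ℂ (s x) = χ x :=
    (WeakDual.CharacterSpace.homeoEval X ℂ).apply_symm_apply (χ x)
  have h2 := congrArg (fun ψ : WeakDual.characterSpace ℂ C(X, ℂ) => ψ g) h1
  have h3 : g (s x) = φ (α (ι g) x) := by
    exact h2
  show α (ι g) x = g (s x) • 1
  rw [h3, ← hT]


set_option maxHeartbeats 1000000 in
/-- The fibre automorphisms associated to `α`. -/
noncomputable def mkBeta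
    (X : Type*) [MetricSpace X] [CompactSpace X]
    (A : Type*) [NormedRing A] [StarRing A] [CStarRing A] [NormedAlgebra ℂ A]
    [CompleteSpace A] [StarModule ℂ A]
    (α : C(X, A) ≃⋆ₐ[ℂ] C(X, A)) (s s' : X → X)
    (hss' : ∀ x, s (s' x) = x)
    (key : ∀ (f : C(X, A)) (x : X), α f x = α (ContinuousMap.const X (f (s x))) x)
    (key' : ∀ (f : C(X, A)) (x : X),
      α.symm f x = α.symm (ContinuousMap.const X (f (s' x))) x)
    (y : X) : A ≃⋆ₐ[ℂ] A where
  toFun := fun a => α (ContinuousMap.const X a) (s' y)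
  invFun := fun a => α.symm (ContinuousMap.const X a) y
  left_inv := by
    intro a
    have h1 := key' (α (ContinuousMap.const X a)) y
    rw [StarAlgEquiv.symm_apply_apply] at h1
    simpa using h1.symm
  right_inv := by
    intro a
    have h1 := key (α.symm (ContinuousMap.const X a)) (s' y)
    rw [StarAlgEquiv.apply_symm_apply] at h1
    rw [hss' y] at h1
    simpa using h1.symm
  map_mul' := by
    intro a b
    show α (ContinuousMap.const X (a * b)) (s' y) = _
    have e : ContinuousMap.const X (a * b)
        = ContinuousMap.const X a * ContinuousMap.const X b := rfl
    rw [e, map_mul, ContinuousMap.mul_apply]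
  map_add' := by
    intro a b
    show α (ContinuousMap.const X (a + b)) (s' y) = _
    have e : ContinuousMap.const X (a + b)
        = ContinuousMap.const X a + ContinuousMap.const X b := rfl
    rw [e, map_add, ContinuousMap.add_apply]
  map_smul' := by
    intro c a
    show α (ContinuousMap.const X (c • a)) (s' y) = _
    have e : ContinuousMap.const X (c • a) = c • ContinuousMap.const X a := rfl
    rw [e, map_smul, ContinuousMap.smul_apply]
  map_star' := by
    intro a
    show α (ContinuousMap.const X (star a)) (s' y) = _
    have e : ContinuousMap.const X (star a) = star (ContinuousMap.const X a) := rfl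
    rw [e, map_star, ContinuousMap.star_apply]

/-- Let `X` be a compact metric space, `A` a unital simple C*-algebra and
`α` a *-automorphism of `C(X,A)`.  If `C(X,A)` is `α`-simple, then there exist a
minimal homeomorphism `σ : X → X` and a strongly continuous map `β` from `X` to the
*-automorphisms of `A` such that `α f x = β_{σ⁻¹ x} (f (σ⁻¹ x))` for all `f`, `x`. -/
theorem alpha_simple_gives_minimal_homeomorphism
    (X : Type*) [MetricSpace X] [CompactSpace X]
    (A : Type*) [NormedRing A] [StarRing A] [CStarRing A] [NormedAlgebra ℂ A]
    [CompleteSpace A] [StarModule ℂ A] [Nontrivial A]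
    (hA : ∀ I : TwoSidedIdeal A, IsClosed (I : Set A) → I = ⊥ ∨ I = ⊤)
    (α : C(X, A) ≃⋆ₐ[ℂ] C(X, A))
    (hαsimple : ∀ I : TwoSidedIdeal C(X, A), IsClosed (I : Set C(X, A)) →
      (∀ f ∈ I, α f ∈ I) → I = ⊥ ∨ I = ⊤) :
    ∃ σ : X ≃ₜ X,
      (∀ Z : Set X, IsClosed Z → ⇑σ '' Z = Z → Z = ∅ ∨ Z = Set.univ) ∧
      ∃ β : X → (A ≃⋆ₐ[ℂ] A),
        (∀ a : A, Continuous fun x : X => β x a) ∧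
        (∀ (f : C(X, A)) (x : X), α f x = β (σ.symm x) (f (σ.symm x))) := by
  rcases isEmpty_or_nonempty X with hX | hX
  · refine ⟨Homeomorph.refl X, ?_, fun _ => StarAlgEquiv.refl ℂ A, ?_, ?_⟩
    · intro Z _ _
      exact Or.inl (Set.eq_empty_of_isEmpty Z)
    · intro a
      rw [continuous_iff_continuousAt]
      intro x
      exact isEmptyElim x
    · intro f x
      exact isEmptyElim x
  obtain ⟨s, hscont, hsι⟩ := exists_point_map X A hA α
  obtain ⟨s', hs'cont, hs'ι⟩ := exists_point_map X A hA α.symm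
  have hinj : ∀ c d : ℂ, c • (1 : A) = d • (1 : A) → c = d := by
    intro c d h
    have h2 : (c - d) • (1 : A) = 0 := by rw [sub_smul, h, sub_self]
    have h3 := congrArg (fun a : A => ‖a‖) h2
    simp only [norm_smul, norm_one, mul_one, norm_zero] at h3
    exact sub_eq_zero.mp (norm_eq_zero.mp h3)
  set ι : C(X, ℂ) → C(X, A) :=
    fun g => ⟨fun y => g y • 1, g.continuous.smul continuous_const⟩ with hι
  have hcomp : ∀ g : C(X, ℂ), α (ι g) = ι (g.comp ⟨s, hscont⟩) := by
    intro g
    ext y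
    rw [show α (ι g) y = g (s y) • 1 from hsι g y]
    rfl
  have hcomp' : ∀ g : C(X, ℂ), α.symm (ι g) = ι (g.comp ⟨s', hs'cont⟩) := by
    intro g
    ext y
    rw [show α.symm (ι g) y = g (s' y) • 1 from hs'ι g y]
    rfl
  have hsep : ∀ (g : C(X, ℂ)) (x : X), g (s (s' x)) = g x := by
    intro g x
    have h1 := congrArg (fun F => α.symm F) (hcomp g)
    simp only [StarAlgEquiv.symm_apply_apply] at h1
    rw [hcomp'] at h1
    have h2 := congrArg (fun F : C(X, A) => F x) h1
    simp only [hι, ContinuousMap.coe_mk, ContinuousMap.comp_apply] at h2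
    exact (hinj _ _ h2).symm
  have hsep' : ∀ (g : C(X, ℂ)) (x : X), g (s' (s x)) = g x := by
    intro g x
    have h1 := congrArg (fun F => α F) (hcomp' g)
    simp only [StarAlgEquiv.apply_symm_apply] at h1
    rw [hcomp] at h1
    have h2 := congrArg (fun F : C(X, A) => F x) h1
    simp only [hι, ContinuousMap.coe_mk, ContinuousMap.comp_apply] at h2
    exact (hinj _ _ h2).symm
  have hss' : ∀ x, s (s' x) = x := by
    intro x
    have h0 := hsep ⟨fun y => ((dist y x : ℝ) : ℂ),
      Complex.continuous_ofReal.comp (continuous_id.dist continuous_const)⟩ x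
    simp only [ContinuousMap.coe_mk, dist_self, Complex.ofReal_zero] at h0
    rw [Complex.ofReal_eq_zero] at h0
    exact dist_eq_zero.mp h0
  have hs's : ∀ x, s' (s x) = x := by
    intro x
    have h0 := hsep' ⟨fun y => ((dist y x : ℝ) : ℂ),
      Complex.continuous_ofReal.comp (continuous_id.dist continuous_const)⟩ x
    simp only [ContinuousMap.coe_mk, dist_self, Complex.ofReal_zero] at h0
    rw [Complex.ofReal_eq_zero] at h0
    exact dist_eq_zero.mp h0
  set τ : X ≃ₜ X :=
    { toFun := s
      invFun := s'
      left_inv := hs's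
      right_inv := hss'
      continuous_toFun := hscont
      continuous_invFun := hs'cont } with hτ
  have key : ∀ (f : C(X, A)) (x : X), α f x = α (ContinuousMap.const X (f (s x))) x := by
    intro f x
    have h0 : (f - ContinuousMap.const X (f (s x))) (s x) = 0 := by
      simp
    have h1 := alpha_loc X A α s hsι _ x h0
    rw [map_sub, ContinuousMap.sub_apply] at h1
    exact sub_eq_zero.mp h1
  have key' : ∀ (f : C(X, A)) (x : X),
      α.symm f x = α.symm (ContinuousMap.const X (f (s' x))) x := by
    intro f x
    have h0 : (f - ContinuousMap.const X (f (s' x))) (s' x) = 0 := by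
      simp
    have h1 := alpha_loc X A α.symm s' hs'ι _ x h0
    rw [map_sub, ContinuousMap.sub_apply] at h1
    exact sub_eq_zero.mp h1
  set β : X → (A ≃⋆ₐ[ℂ] A) := fun y => mkBeta X A α s s' hss' key key' y with hβ
  have hβapp : ∀ (y : X) (a : A), β y a = α (ContinuousMap.const X a) (s' y) :=
    fun y a => rfl
  refine ⟨τ.symm, ?_, β, ?_, ?_⟩
  · -- minimality
    intro Z hZclosed hZinv
    by_cases hZe : Z = ∅
    · exact Or.inl hZe
    right
    obtain ⟨z₀, hz₀⟩ := Set.nonempty_iff_ne_empty.mpr hZe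
    have hZs' : s' '' Z = Z := hZinv
    have hsZ : ∀ x ∈ Z, s x ∈ Z := by
      intro x hx
      rw [← hZs'] at hx
      obtain ⟨z, hzZ, hzx⟩ := hx
      have hz2 : s x = z := by rw [← hzx, hss' z]
      rw [hz2]
      exact hzZ
    set IZ : TwoSidedIdeal C(X, A) := TwoSidedIdeal.mk' {f : C(X, A) | ∀ z ∈ Z, f z = 0}
      (fun z hz => rfl)
      (fun {f g} hf hg z hz => by rw [ContinuousMap.add_apply, hf z hz, hg z hz, add_zero])
      (fun {f} hf z hz => by rw [ContinuousMap.neg_apply, hf z hz, neg_zero])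
      (fun {f g} hg z hz => by rw [ContinuousMap.mul_apply, hg z hz, mul_zero])
      (fun {f g} hf z hz => by rw [ContinuousMap.mul_apply, hf z hz, zero_mul])
      with hIZ
    have hIZmem : ∀ f : C(X, A), f ∈ IZ ↔ ∀ z ∈ Z, f z = 0 := fun f =>
      TwoSidedIdeal.mem_mk' _ _ _ _ _ _ f
    have hIZclosed : IsClosed (IZ : Set C(X, A)) := by
      rw [show (IZ : Set C(X, A)) = {f : C(X, A) | ∀ z ∈ Z, f z = 0} from Set.ext fun f => hIZmem f]
      have e : {f : C(X, A) | ∀ z ∈ Z, f z = 0} = ⋂ z ∈ Z, {f : C(X, A) | f z = 0} := by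
        ext f
        simp
      rw [e]
      exact isClosed_biInter fun z _ =>
        isClosed_eq (continuous_eval_const z) continuous_const
    have hinv : ∀ f ∈ IZ, α f ∈ IZ := by
      intro f hf
      rw [hIZmem] at hf ⊢
      intro z hz
      rw [key f z, hf (s z) (hsZ z hz)]
      have e : ContinuousMap.const X (0 : A) = 0 := rfl
      rw [e, map_zero, ContinuousMap.zero_apply]
    rcases hαsimple IZ hIZclosed hinv with hbot | htop
    · by_contra hZu
      obtain ⟨x₀, hx₀⟩ := (Set.ne_univ_iff_exists_notMem Z).mp hZu
      set f0 : C(X, A) := ⟨fun y => ((Metric.infDist y Z : ℝ) : ℂ) • 1,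
        (Complex.continuous_ofReal.comp (Metric.continuous_infDist_pt Z)).smul
          continuous_const⟩ with hf0def
      have hf0 : f0 ∈ IZ := by
        rw [hIZmem]
        intro z hz
        show ((Metric.infDist z Z : ℝ) : ℂ) • (1 : A) = 0
        rw [Metric.infDist_zero_of_mem hz]
        simp
      rw [hbot, TwoSidedIdeal.mem_bot] at hf0
      have h2 := congrArg (fun F : C(X, A) => F x₀) hf0
      have hpos : 0 < Metric.infDist x₀ Z :=
        (hZclosed.notMem_iff_infDist_pos ⟨z₀, hz₀⟩).mp hx₀
      have h3 : ((Metric.infDist x₀ Z : ℝ) : ℂ) = 0 := by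
        refine hinj _ 0 ?_
        rw [zero_smul]
        exact h2
      rw [Complex.ofReal_eq_zero] at h3
      exact absurd h3 (ne_of_gt hpos)
    · exfalso
      have h1 : (1 : C(X, A)) ∈ IZ := htop ▸ TwoSidedIdeal.mem_top _
      rw [hIZmem] at h1
      have h2 := h1 z₀ hz₀
      rw [ContinuousMap.one_apply] at h2
      exact one_ne_zero h2
  · intro a
    show Continuous fun x => α (ContinuousMap.const X a) (s' x)
    exact (α (ContinuousMap.const X a)).continuous.comp hs'cont
  · intro f x
    have hτ2 : ∀ z : X, τ.symm.symm z = s z := fun z => rfl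
    rw [key f x, hτ2, hβapp, hs's x]
end

section
/- Let X be a compact metric space, let A be a unital simple C*-algebra, let σ : X → X be a minimal homeomorphism, and let β be a strongly continuous map from X to the *-automorphisms of A. Define α : C(X,A) → C(X,A) by α(f)(x) = β_{σ^{-1}(x)}(f(σ^{-1}(x))). Then α is a *-automorphism of C(X,A) and C(X,A) is α-simple. -/
open Filter Topology

lemma beta_norm {A : Type*} [NormedRing A] [StarRing A] [CStarRing A] [NormedAlgebra ℂ A]
    [CompleteSpace A] [StarModule ℂ A] (φ : A ≃⋆ₐ[ℂ] A) (a : A) : ‖φ a‖ = ‖a‖ := by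
  letI : CStarAlgebra A := { }
  exact StarAlgEquiv.norm_map φ a


lemma beta_cont {X : Type*} [TopologicalSpace X] {A : Type*} [NormedRing A] [StarRing A]
    [CStarRing A] [NormedAlgebra ℂ A] [CompleteSpace A] [StarModule ℂ A]
    (β : X → (A ≃⋆ₐ[ℂ] A)) (hβ : ∀ a : A, Continuous fun x : X => β x a)
    {g : X → A} (hg : Continuous g) : Continuous fun x => β x (g x) := by
  rw [continuous_iff_continuousAt]
  intro x₀
  rw [ContinuousAt, tendsto_iff_norm_sub_tendsto_zero]
  have h1 : Tendsto (fun x => ‖g x - g x₀‖ + ‖β x (g x₀) - β x₀ (g x₀)‖) (𝓝 x₀) (𝓝 0) := by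
    have a1 : Tendsto (fun x => ‖g x - g x₀‖) (𝓝 x₀) (𝓝 0) :=
      tendsto_iff_norm_sub_tendsto_zero.mp (hg.tendsto x₀)
    have a2 : Tendsto (fun x => ‖β x (g x₀) - β x₀ (g x₀)‖) (𝓝 x₀) (𝓝 0) :=
      tendsto_iff_norm_sub_tendsto_zero.mp ((hβ (g x₀)).tendsto x₀)
    simpa using a1.add a2
  refine squeeze_zero (fun x => norm_nonneg _) (fun x => ?_) h1
  calc ‖β x (g x) - β x₀ (g x₀)‖
      ≤ ‖β x (g x) - β x (g x₀)‖ + ‖β x (g x₀) - β x₀ (g x₀)‖ := norm_sub_le_norm_sub_add_norm_sub _ _ _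
    _ = ‖g x - g x₀‖ + ‖β x (g x₀) - β x₀ (g x₀)‖ := by
        rw [← map_sub, beta_norm]


lemma beta_symm_cont {X : Type*} [TopologicalSpace X] {A : Type*} [NormedRing A] [StarRing A]
    [CStarRing A] [NormedAlgebra ℂ A] [CompleteSpace A] [StarModule ℂ A]
    (β : X → (A ≃⋆ₐ[ℂ] A)) (hβ : ∀ a : A, Continuous fun x : X => β x a)
    {g : X → A} (hg : Continuous g) : Continuous fun x => (β x).symm (g x) := by
  rw [continuous_iff_continuousAt]
  intro x₀
  rw [ContinuousAt, tendsto_iff_norm_sub_tendsto_zero]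
  set b := (β x₀).symm (g x₀) with hb
  have h1 : Tendsto (fun x => ‖g x - g x₀‖ + ‖β x₀ b - β x b‖) (𝓝 x₀) (𝓝 0) := by
    have a1 : Tendsto (fun x => ‖g x - g x₀‖) (𝓝 x₀) (𝓝 0) :=
      tendsto_iff_norm_sub_tendsto_zero.mp (hg.tendsto x₀)
    have a2 : Tendsto (fun x => ‖β x₀ b - β x b‖) (𝓝 x₀) (𝓝 0) := by
      have := tendsto_iff_norm_sub_tendsto_zero.mp ((hβ b).tendsto x₀)
      simpa [norm_sub_rev] using this
    simpa using a1.add a2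
  refine squeeze_zero (fun x => norm_nonneg _) (fun x => ?_) h1
  have key : ‖(β x).symm (g x) - b‖ = ‖g x - β x b‖ := by
    rw [← beta_norm (β x) ((β x).symm (g x) - b), map_sub]
    simp
  rw [key]
  have hg0 : g x₀ = β x₀ b := by simp [hb]
  calc ‖g x - β x b‖ ≤ ‖g x - g x₀‖ + ‖g x₀ - β x b‖ := norm_sub_le_norm_sub_add_norm_sub _ _ _
    _ = ‖g x - g x₀‖ + ‖β x₀ b - β x b‖ := by rw [hg0]

noncomputable def alphaAux {X : Type*} [TopologicalSpace X] {A : Type*} [NormedRing A] [StarRing A]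
    [CStarRing A] [NormedAlgebra ℂ A] [CompleteSpace A] [StarModule ℂ A]
    (σ : X ≃ₜ X) (β : X → (A ≃⋆ₐ[ℂ] A)) (hβ : ∀ a : A, Continuous fun x : X => β x a) :
    C(X, A) ≃⋆ₐ[ℂ] C(X, A) where
  toFun f := ⟨fun x => β (σ.symm x) (f (σ.symm x)),
    (beta_cont β hβ f.continuous).comp σ.symm.continuous⟩
  invFun f := ⟨fun x => (β x).symm (f (σ x)),
    beta_symm_cont β hβ (f.continuous.comp σ.continuous)⟩
  left_inv f := by ext x; simp
  right_inv f := by ext x; simp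
  map_mul' f g := by ext x; simp
  map_add' f g := by ext x; simp
  map_smul' c f := by ext x; simp [map_smul]
  map_star' f := by ext x; simp [map_star]

lemma alphaAux_apply {X : Type*} [TopologicalSpace X] {A : Type*} [NormedRing A] [StarRing A]
    [CStarRing A] [NormedAlgebra ℂ A] [CompleteSpace A] [StarModule ℂ A]
    (σ : X ≃ₜ X) (β : X → (A ≃⋆ₐ[ℂ] A)) (hβ : ∀ a : A, Continuous fun x : X => β x a)
    (f : C(X, A)) (x : X) : alphaAux σ β hβ f x = β (σ.symm x) (f (σ.symm x)) := rfl

lemma eval_ideal_dense {X : Type*} [TopologicalSpace X] {A : Type*} [NormedRing A] [StarRing A]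
    [CStarRing A] [NormedAlgebra ℂ A] [CompleteSpace A] [StarModule ℂ A]
    (hA : ∀ I : TwoSidedIdeal A, IsClosed (I : Set A) → I = ⊥ ∨ I = ⊤)
    (I : TwoSidedIdeal C(X, A)) (x : X) (f0 : C(X, A)) (hf0 : f0 ∈ I) (hf0x : f0 x ≠ 0)
    (a : A) (ε : ℝ) (hε : 0 < ε) : ∃ g ∈ I, ‖g x - a‖ < ε := by
  set S : Set A := (fun f : C(X, A) => f x) '' (I : Set C(X, A)) with hS
  have hS0 : (0 : A) ∈ S := ⟨0, I.zero_mem, rfl⟩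
  have hSadd : ∀ {a b : A}, a ∈ S → b ∈ S → a + b ∈ S := by
    rintro a b ⟨f, hf, rfl⟩ ⟨g, hg, rfl⟩
    exact ⟨f + g, I.add_mem hf hg, rfl⟩
  have hSneg : ∀ {a : A}, a ∈ S → -a ∈ S := by
    rintro a ⟨f, hf, rfl⟩
    exact ⟨-f, I.neg_mem hf, rfl⟩
  have hSl : ∀ {c b : A}, b ∈ S → c * b ∈ S := by
    rintro c b ⟨f, hf, rfl⟩
    exact ⟨ContinuousMap.const X c * f, I.mul_mem_left _ _ hf, by simp⟩
  have hSr : ∀ {c b : A}, b ∈ S → b * c ∈ S := by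
    rintro c b ⟨f, hf, rfl⟩
    exact ⟨f * ContinuousMap.const X c, I.mul_mem_right _ _ hf, by simp⟩
  set J : TwoSidedIdeal A := TwoSidedIdeal.mk' (closure S)
    (subset_closure hS0)
    (fun ha hb => map_mem_closure₂ continuous_add ha hb fun a ha b hb => hSadd ha hb)
    (fun ha => map_mem_closure continuous_neg ha fun b hb => hSneg hb)
    (fun {c b} hb => map_mem_closure (continuous_mul_left c) hb fun e he => hSl he)
    (fun {b c} hb => map_mem_closure (f := fun z => z * c) (continuous_mul_right c) hb fun e he => hSr he) with hJ
  have hJmem : ∀ b : A, b ∈ J ↔ b ∈ closure S := fun b => TwoSidedIdeal.mem_mk' _ _ _ _ _ _ b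
  have hJclosed : IsClosed (J : Set A) := by
    have : (J : Set A) = closure S := TwoSidedIdeal.coe_mk' _ _ _ _ _ _
    rw [this]; exact isClosed_closure
  have hJtop : J = ⊤ := by
    rcases hA J hJclosed with h | h
    · exfalso
      have : f0 x ∈ J := (hJmem _).mpr (subset_closure ⟨f0, hf0, rfl⟩)
      rw [h, TwoSidedIdeal.mem_bot] at this
      exact hf0x this
    · exact h
  have ha : a ∈ closure S := by
    rw [← hJmem]; rw [hJtop]; exact TwoSidedIdeal.mem_top _
  rw [Metric.mem_closure_iff] at ha
  obtain ⟨b, ⟨g, hg, rfl⟩, hd⟩ := ha ε hε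
  exact ⟨g, hg, by rwa [← dist_eq_norm, dist_comm]⟩

lemma ideal_eq_top {X : Type*} [MetricSpace X] [CompactSpace X] {A : Type*} [NormedRing A]
    [StarRing A] [CStarRing A] [NormedAlgebra ℂ A] [CompleteSpace A] [StarModule ℂ A]
    (hA : ∀ I : TwoSidedIdeal A, IsClosed (I : Set A) → I = ⊥ ∨ I = ⊤)
    (I : TwoSidedIdeal C(X, A)) (hI : IsClosed (I : Set C(X, A)))
    (hpt : ∀ x : X, ∃ f ∈ I, f x ≠ 0) : I = ⊤ := by
  refine SetLike.ext fun h => ⟨fun _ => TwoSidedIdeal.mem_top _, fun _ => ?_⟩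
  -- show h ∈ I
  have key : ∀ ε : ℝ, 0 < ε → ∃ g ∈ I, ‖h - g‖ ≤ ε := by
    intro ε hε
    have hε2 : 0 < ε / 2 := by linarith
    -- choose good local approximants
    have hloc : ∀ x : X, ∃ g ∈ I, ‖g x - h x‖ < ε / 2 := by
      intro x
      obtain ⟨f0, hf0, hf0x⟩ := hpt x
      exact eval_ideal_dense hA I x f0 hf0 hf0x (h x) (ε / 2) hε2
    choose g hgI hgx using hloc
    set U : X → Set X := fun x => {y | ‖g x y - h y‖ < ε / 2} with hU
    have hUopen : ∀ x, IsOpen (U x) := by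
      intro x
      have : Continuous fun y => ‖g x y - h y‖ :=
        ((g x).continuous.sub h.continuous).norm
      exact isOpen_lt this continuous_const
    have hUcov : (Set.univ : Set X) ⊆ ⋃ x, U x := fun y _ => Set.mem_iUnion.2 ⟨y, hgx y⟩
    obtain ⟨t, ht⟩ := isCompact_univ.elim_finite_subcover U hUopen hUcov
    obtain ⟨φ, hφ⟩ := PartitionOfUnity.exists_isSubordinate (ι := ↥t) isClosed_univ
      (fun i => U ↑i) (fun i => hUopen _)
      (by intro y hy
          rcases Set.mem_iUnion₂.1 (ht hy) with ⟨x, hx, hyx⟩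
          exact Set.mem_iUnion.2 ⟨⟨x, hx⟩, hyx⟩)
    -- scalar-valued functions into C(X,A)
    set c : ↥t → C(X, A) := fun i =>
      ⟨fun y => ((φ i y : ℝ) : ℂ) • (1 : A),
        ((Complex.continuous_ofReal.comp (φ i).continuous).smul continuous_const)⟩ with hc
    set G : C(X, A) := ∑ i : ↥t, c i * g ↑i with hG
    have hGI : G ∈ I := by
      refine sum_mem fun i _ => I.mul_mem_left _ _ (hgI _)
    refine ⟨G, hGI, ?_⟩
    rw [ContinuousMap.norm_le _ (le_of_lt hε)]
    intro y
    have hsum1 : ∑ i : ↥t, φ i y = 1 := by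
      have := φ.sum_eq_one (Set.mem_univ y)
      rwa [finsum_eq_sum_of_fintype] at this
    have hGy : G y = ∑ i : ↥t, ((φ i y : ℝ) : ℂ) • g ↑i y := by
      rw [hG, ContinuousMap.coe_sum]
      simp [hc, smul_mul_assoc]
    have hhy : h y = ∑ i : ↥t, ((φ i y : ℝ) : ℂ) • h y := by
      rw [← Finset.sum_smul]
      norm_cast
      rw [hsum1, one_smul]
    rw [ContinuousMap.sub_apply, hGy, hhy, ← Finset.sum_sub_distrib]
    have hterm : ∀ i : ↥t, ‖((φ i y : ℝ) : ℂ) • h y - ((φ i y : ℝ) : ℂ) • g ↑i y‖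
        ≤ φ i y * (ε / 2) := by
      intro i
      rw [← smul_sub]
      rw [norm_smul]
      simp only [Complex.norm_real, Real.norm_eq_abs, abs_of_nonneg (φ.nonneg i y)]
      by_cases hzy : φ i y = 0
      · simp [hzy]
      · have hy' : y ∈ U ↑i := hφ i (subset_tsupport _ hzy)
        have : ‖h y - g ↑i y‖ < ε / 2 := by
          rw [norm_sub_rev]; exact hy'
        exact mul_le_mul_of_nonneg_left this.le (φ.nonneg i y)
    calc ‖∑ i : ↥t, (((φ i y : ℝ) : ℂ) • h y - ((φ i y : ℝ) : ℂ) • g ↑i y)‖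
        ≤ ∑ i : ↥t, ‖((φ i y : ℝ) : ℂ) • h y - ((φ i y : ℝ) : ℂ) • g ↑i y‖ :=
          norm_sum_le _ _
      _ ≤ ∑ i : ↥t, φ i y * (ε / 2) := Finset.sum_le_sum fun i _ => hterm i
      _ = (∑ i : ↥t, φ i y) * (ε / 2) := by rw [Finset.sum_mul]
      _ = ε / 2 := by rw [hsum1, one_mul]
      _ ≤ ε := by linarith
  have : h ∈ closure (I : Set C(X, A)) := by
    rw [Metric.mem_closure_iff]
    intro ε hε
    obtain ⟨g, hg, hgh⟩ := key (ε / 2) (by linarith)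
    exact ⟨g, hg, by rw [dist_eq_norm]; linarith⟩
  rwa [hI.closure_eq] at this

/-- Let `X` be a compact metric space, `A` a unital simple C*-algebra,
`σ : X → X` a minimal homeomorphism and `β` a strongly continuous map from `X` to the
*-automorphisms of `A`.  Define `α : C(X,A) → C(X,A)` by
`α f x = β_{σ⁻¹ x} (f (σ⁻¹ x))`.  Then `α` is a *-automorphism of `C(X,A)` and
`C(X,A)` is `α`-simple. -/
theorem minimal_homeomorphism_gives_alpha_simple
    (X : Type*) [MetricSpace X] [CompactSpace X]
    (A : Type*) [NormedRing A] [StarRing A] [CStarRing A] [NormedAlgebra ℂ A]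
    [CompleteSpace A] [StarModule ℂ A] [Nontrivial A]
    (hA : ∀ I : TwoSidedIdeal A, IsClosed (I : Set A) → I = ⊥ ∨ I = ⊤)
    (σ : X ≃ₜ X)
    (hmin : ∀ Z : Set X, IsClosed Z → ⇑σ '' Z = Z → Z = ∅ ∨ Z = Set.univ)
    (β : X → (A ≃⋆ₐ[ℂ] A))
    (hβ : ∀ a : A, Continuous fun x : X => β x a) :
    ∃ α : C(X, A) ≃⋆ₐ[ℂ] C(X, A),
      (∀ (f : C(X, A)) (x : X), α f x = β (σ.symm x) (f (σ.symm x))) ∧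
      (∀ I : TwoSidedIdeal C(X, A), IsClosed (I : Set C(X, A)) →
        (∀ f ∈ I, α f ∈ I) → I = ⊥ ∨ I = ⊤) := by
  refine ⟨alphaAux σ β hβ, fun f x => rfl, ?_⟩
  intro I hI hInv
  set Z : Set X := {x | ∀ f ∈ I, f x = 0} with hZ
  have hZclosed : IsClosed Z := by
    have : Z = ⋂ (f : C(X, A)) (_ : f ∈ I), (fun x => f x) ⁻¹' {0} := by
      ext x; simp [hZ]
    rw [this]
    exact isClosed_iInter fun f => isClosed_iInter fun _ =>
      (isClosed_singleton).preimage f.continuous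
  rcases Set.eq_empty_or_nonempty Z with hZe | hZne
  · -- Z empty: every point has a nonvanishing element, so I = ⊤
    right
    refine ideal_eq_top hA I hI fun x => ?_
    by_contra hcon
    push_neg at hcon
    have : x ∈ Z := fun f hf => by
      by_contra hafx
      exact hafx (hcon f hf)
    rw [hZe] at this
    exact this
  · -- Z nonempty: show Z = univ, so I = ⊥
    left
    have hZinv : ∀ x ∈ Z, σ.symm x ∈ Z := by
      intro x hx f hf
      have h1 : alphaAux σ β hβ f ∈ I := hInv f hf
      have h2 : alphaAux σ β hβ f x = 0 := hx _ h1
      rw [alphaAux_apply] at h2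
      exact (β (σ.symm x)).injective (by simpa using h2)
    set Zseq : ℕ → Set X := fun n => (⇑σ.symm)^[n] '' Z with hZseq
    have hsucc : ∀ n, Zseq (n + 1) = ⇑σ.symm '' Zseq n := by
      intro n
      simp only [hZseq, Function.iterate_succ', Set.image_comp]
    have hbase : ⇑σ.symm '' Z ⊆ Z := by
      rintro _ ⟨x, hx, rfl⟩
      exact hZinv x hx
    have hanti : ∀ n, Zseq (n + 1) ⊆ Zseq n := by
      intro n
      have heq : Zseq (n + 1) = (⇑σ.symm)^[n] '' (⇑σ.symm '' Z) := by
        simp only [hZseq, Function.iterate_succ, Set.image_comp]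
      rw [heq]
      exact Set.image_mono hbase
    have hZcpt : IsCompact Z := hZclosed.isCompact
    have hcpt : ∀ n, IsCompact (Zseq n) := fun n =>
      hZcpt.image (σ.symm.continuous.iterate n)
    have hcl : ∀ n, IsClosed (Zseq n) := fun n => (hcpt n).isClosed
    have hne : ∀ n, (Zseq n).Nonempty := fun n => hZne.image _
    set W : Set X := ⋂ n, Zseq n with hW
    have hWne : W.Nonempty :=
      IsCompact.nonempty_iInter_of_sequence_nonempty_isCompact_isClosed Zseq hanti hne (hcpt 0) hcl
    have hWcl : IsClosed W := isClosed_iInter hcl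
    have hWinv : ⇑σ '' W = W := by
      apply Set.Subset.antisymm
      · rintro _ ⟨x, hx, rfl⟩
        rw [Set.mem_iInter]
        intro n
        have hx' : x ∈ Zseq (n + 1) := Set.mem_iInter.1 hx (n + 1)
        rw [hsucc n] at hx'
        obtain ⟨y, hy, rfl⟩ := hx'
        simpa using hy
      · intro x hx
        refine ⟨σ.symm x, ?_, σ.apply_symm_apply x⟩
        rw [Set.mem_iInter]
        intro n
        have : σ.symm x ∈ Zseq (n + 1) := by
          rw [hsucc n]
          exact ⟨x, Set.mem_iInter.1 hx n, rfl⟩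
        exact hanti n this
    rcases hmin W hWcl hWinv with h | h
    · exact absurd h (by simpa [Set.nonempty_iff_ne_empty] using hWne)
    · have hZuniv : Z = Set.univ := by
        apply Set.eq_univ_of_univ_subset
        rw [← h]
        intro x hx
        have : x ∈ Zseq 0 := Set.mem_iInter.1 hx 0
        simpa [hZseq] using this
      refine SetLike.ext fun f => ⟨fun hf => ?_, fun hf => ?_⟩
      · rw [TwoSidedIdeal.mem_bot]
        ext x
        have hxZ : x ∈ Z := by rw [hZuniv]; trivial
        simpa using hxZ f hf
      · rw [TwoSidedIdeal.mem_bot] at hf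
        rw [hf]
        exact I.zero_mem
end

section
/- Let X be a compact metric space, let σ : X → X be a minimal homeomorphism, let Y ⊆ X be a nonempty clopen subset, and let n(0) < n(1) < ... < n(l) be the distinct values taken by the first return time λ_Y on Y. Set Y_k = {x ∈ Y : λ_Y(x) = n(k)}. Then the sets σ^{n(k)}(Y_k), for 0 ≤ k ≤ l, are pairwise disjoint and their union is Y. -/
/-- `firstReturnTimeIs σ Y x n` says that `n ≥ 1` is the smallest positive integer
with `σ^n x ∈ Y`, i.e. the first return time of `x` to `Y` equals `n`. -/
def firstReturnTimeIs {X : Type*} (σ : X → X) (Y : Set X) (x : X) (n : ℕ) : Prop :=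
  1 ≤ n ∧ σ^[n] x ∈ Y ∧ ∀ m : ℕ, 1 ≤ m → m < n → σ^[m] x ∉ Y

lemma frt_unique {X : Type*} {σ : X → X} {Y : Set X} {x : X} {a b : ℕ}
    (ha : firstReturnTimeIs σ Y x a) (hb : firstReturnTimeIs σ Y x b) : a = b := by
  by_contra h
  rcases Nat.lt_or_ge a b with hab | hab
  · exact hb.2.2 a ha.1 hab ha.2.1
  · exact ha.2.2 b hb.1 (lt_of_le_of_ne hab (Ne.symm h)) hb.2.1

/-- Under minimality, the backward orbit of any point visits any nonempty clopen set. -/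
lemma exists_backward_return {X : Type*} [MetricSpace X] [CompactSpace X] (σ : X ≃ₜ X)
    (hmin : ∀ Z : Set X, IsClosed Z → ⇑σ '' Z = Z → Z = ∅ ∨ Z = Set.univ)
    (Y : Set X) (hY : IsClopen Y) (hYne : Y.Nonempty) (y : X) :
    ∃ m : ℕ, 1 ≤ m ∧ (⇑σ.symm)^[m] y ∈ Y := by
  set τ : X → X := ⇑σ.symm with hτ
  set x : X := τ y with hx
  set D : Set X := closure (Set.range fun m : ℕ => τ^[m] x) with hD
  have hDclosed : IsClosed D := isClosed_closure
  have hDne : D.Nonempty := ⟨x, subset_closure ⟨0, rfl⟩⟩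
  have hτD : τ '' D ⊆ D := by
    have h : ⇑σ.symm '' closure (Set.range fun m : ℕ => τ^[m] x) ⊆
        closure (Set.range fun m : ℕ => τ^[m] x) := by
      rw [σ.symm.image_closure]
      apply closure_mono
      rintro _ ⟨_, ⟨m, rfl⟩, rfl⟩
      refine ⟨m + 1, ?_⟩
      show τ^[m + 1] x = τ (τ^[m] x)
      exact Function.iterate_succ_apply' τ m x
    exact h
  set S : ℕ → Set X := fun j => τ^[j] '' D with hS
  have hScomp : ∀ j, IsCompact (S j) :=
    fun j => (hDclosed.isCompact).image (σ.symm.continuous.iterate j)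
  have hSne : ∀ j, (S j).Nonempty := fun j => hDne.image _
  have hSsucc : ∀ j, S (j + 1) = τ '' S j := by
    intro j
    simp only [hS, ← Set.image_comp, ← Function.iterate_succ' τ j]
  have hanti : ∀ j, S (j + 1) ⊆ S j := by
    intro j
    have h : S (j + 1) = τ^[j] '' (τ '' D) := by
      show τ^[j + 1] '' D = _
      rw [Function.iterate_succ, Set.image_comp]
    rw [h]
    exact Set.image_mono hτD
  set Dinf : Set X := ⋂ j, S j with hDinf
  have hne : Dinf.Nonempty :=
    IsCompact.nonempty_iInter_of_sequence_nonempty_isCompact_isClosed S hanti hSne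
      (hScomp 0) (fun j => (hScomp j).isClosed)
  have hτinf : τ '' Dinf = Dinf := by
    have h1 : τ '' Dinf = ⋂ j, τ '' S j := Set.image_iInter σ.symm.bijective S
    have h2 : (⋂ j, τ '' S j) = ⋂ j, S (j + 1) := by
      simp only [hSsucc]
    rw [h1, h2]
    apply Set.Subset.antisymm
    · apply Set.subset_iInter
      intro j
      cases j with
      | zero => exact (Set.iInter_subset _ 0).trans (hanti 0)
      | succ j => exact (Set.iInter_subset _ (j + 1)).trans (hanti (j + 1))
    · exact Set.subset_iInter fun j => Set.iInter_subset _ (j + 1)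
  have hσinf : ⇑σ '' Dinf = Dinf := by
    conv_lhs => rw [← hτinf]
    rw [← Set.image_comp, hτ]
    have : ⇑σ ∘ ⇑σ.symm = id := σ.self_comp_symm
    rw [this, Set.image_id]
  have hclosed : IsClosed Dinf := isClosed_iInter fun j => (hScomp j).isClosed
  rcases hmin Dinf hclosed hσinf with h | h
  · exact absurd h (Set.nonempty_iff_ne_empty.mp hne)
  · have hDuniv : D = Set.univ := by
      apply Set.eq_univ_of_univ_subset
      rw [← h]
      have : Dinf ⊆ S 0 := Set.iInter_subset _ 0
      simpa [hS] using this
    have hdense : Dense (Set.range fun m : ℕ => τ^[m] x) := by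
      rw [dense_iff_closure_eq]; exact hDuniv
    obtain ⟨_, ⟨m, rfl⟩, hmY⟩ := hdense.exists_mem_open hY.isOpen hYne
    refine ⟨m + 1, Nat.succ_le_succ (Nat.zero_le m), ?_⟩
    rw [Function.iterate_succ_apply]
    exact hmY

/-- With `n 0 < n 1 < ... < n l` the distinct values of the first return
time `λ_Y` on `Y` and `Y_k = {x ∈ Y : λ_Y(x) = n k}`, the sets `σ^{n k}(Y_k)` for
`0 ≤ k ≤ l` are pairwise disjoint and their union is `Y`. -/
theorem rokhlin_tower_partition_of_Y
    (X : Type*) [MetricSpace X] [CompactSpace X] (σ : X ≃ₜ X)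
    (hmin : ∀ Z : Set X, IsClosed Z → ⇑σ '' Z = Z → Z = ∅ ∨ Z = Set.univ)
    (Y : Set X) (hY : IsClopen Y) (hYne : Y.Nonempty)
    (l : ℕ) (n : Fin (l + 1) → ℕ) (hmono : StrictMono n)
    (hvals : ∀ x ∈ Y, ∃ k : Fin (l + 1), firstReturnTimeIs (⇑σ) Y x (n k))
    (hattained : ∀ k : Fin (l + 1), ∃ x ∈ Y, firstReturnTimeIs (⇑σ) Y x (n k)) :
    (∀ k k' : Fin (l + 1), k ≠ k' →
      Disjoint ((⇑σ)^[n k] '' {x ∈ Y | firstReturnTimeIs (⇑σ) Y x (n k)})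
               ((⇑σ)^[n k'] '' {x ∈ Y | firstReturnTimeIs (⇑σ) Y x (n k')})) ∧
    (⋃ k : Fin (l + 1),
      (⇑σ)^[n k] '' {x ∈ Y | firstReturnTimeIs (⇑σ) Y x (n k)}) = Y := by
  have key : ∀ a b : ℕ, a < b →
      Disjoint ((⇑σ)^[a] '' {x ∈ Y | firstReturnTimeIs (⇑σ) Y x a})
               ((⇑σ)^[b] '' {x ∈ Y | firstReturnTimeIs (⇑σ) Y x b}) := by
    intro a b hab
    rw [Set.disjoint_left]
    rintro z ⟨x, ⟨hxY, hxf⟩, rfl⟩ ⟨x', ⟨hx'Y, hx'f⟩, heq⟩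
    have hd : 1 ≤ b - a := Nat.le_sub_of_add_le (by omega)
    have hba : a + (b - a) = b := by omega
    have hsplit : (⇑σ)^[b] x' = (⇑σ)^[a] ((⇑σ)^[b - a] x') := by
      have h := Function.iterate_add_apply (⇑σ) a (b - a) x'
      rw [hba] at h
      exact h
    rw [hsplit] at heq
    have hinj : Function.Injective ((⇑σ)^[a]) := σ.injective.iterate a
    have : (⇑σ)^[b - a] x' = x := hinj heq
    exact hx'f.2.2 (b - a) hd (by have := hxf.1; omega) (this ▸ hxY)
  constructor
  · intro k k' hkk'
    rcases lt_or_gt_of_ne hkk' with h | h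
    · exact key _ _ (hmono h)
    · exact (key _ _ (hmono h)).symm
  · apply Set.Subset.antisymm
    · apply Set.iUnion_subset
      rintro k _ ⟨x, ⟨hxY, hxf⟩, rfl⟩
      exact hxf.2.1
    · intro y hy
      obtain ⟨m₁, hm₁1, hm₁Y⟩ := exists_backward_return σ hmin Y hY hYne y
      have hex : ∃ m : ℕ, 1 ≤ m ∧ (⇑σ.symm)^[m] y ∈ Y := ⟨m₁, hm₁1, hm₁Y⟩
      classical
      set m₀ := Nat.find hex with hm₀
      obtain ⟨hm₀1, hm₀Y⟩ := Nat.find_spec hex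
      set x : X := (⇑σ.symm)^[m₀] y with hx
      have hLI : Function.LeftInverse ⇑σ ⇑σ.symm := σ.apply_symm_apply
      have hback : (⇑σ)^[m₀] x = y := (hLI.iterate m₀) y
      have hfrt : firstReturnTimeIs (⇑σ) Y x m₀ := by
        refine ⟨hm₀1, ?_, ?_⟩
        · rw [hback]; exact hy
        · intro j hj1 hjm
          have hjm' : j + (m₀ - j) = m₀ := by omega
          have hsplit : (⇑σ.symm)^[m₀] y = (⇑σ.symm)^[j] ((⇑σ.symm)^[m₀ - j] y) := by
            have h := Function.iterate_add_apply (⇑σ.symm) j (m₀ - j) y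
            rw [hjm'] at h
            exact h
          have : (⇑σ)^[j] x = (⇑σ.symm)^[m₀ - j] y := by
            rw [hx, hsplit]
            exact (hLI.iterate j) _
          rw [this]
          have hlt : m₀ - j < m₀ := by omega
          have := Nat.find_min hex hlt
          intro hmem
          exact this ⟨by omega, hmem⟩
      obtain ⟨k, hk⟩ := hvals x hm₀Y
      have : m₀ = n k := frt_unique hfrt hk
      rw [this] at hback
      exact Set.mem_iUnion.mpr ⟨k, ⟨x, ⟨hm₀Y, this ▸ hfrt⟩, hback⟩⟩
end

section
/- Let X be a Cantor set with metric d, let σ : X → X be a minimal homeomorphism, let y ∈ X, let δ > 0, and let N₀, N be nonnegative integers. Then there exists a clopen neighborhood Y of y such that the sets σ^i(Y), for −N₀ ≤ i ≤ N, are pairwise disjoint and each has diameter less than δ. -/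
/-- Let `X` be a Cantor set (nonempty compact metrizable, totally
disconnected and perfect), `σ : X → X` a minimal homeomorphism, `y ∈ X`, `δ > 0`,
and `N₀, N` nonnegative integers.  Then there is a clopen neighborhood `Y` of `y`
such that the sets `σ^i(Y)` for `-N₀ ≤ i ≤ N` are pairwise disjoint and each has
diameter less than `δ`. -/
theorem small_clopen_tower_base
    (X : Type*) [MetricSpace X] [CompactSpace X] [Nonempty X]
    [TotallyDisconnectedSpace X] [PerfectSpace X]
    (σ : X ≃ₜ X)
    (hmin : ∀ Z : Set X, IsClosed Z → ⇑σ '' Z = Z → Z = ∅ ∨ Z = Set.univ)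
    (y : X) (δ : ℝ) (hδ : 0 < δ) (N₀ N : ℕ) :
    ∃ Y : Set X, IsClopen Y ∧ y ∈ Y ∧
      (∀ i j : ℤ, -(N₀ : ℤ) ≤ i → i ≤ N → -(N₀ : ℤ) ≤ j → j ≤ N → i ≠ j →
        Disjoint (⇑(σ.toEquiv ^ i) '' Y) (⇑(σ.toEquiv ^ j) '' Y)) ∧
      (∀ i : ℤ, -(N₀ : ℤ) ≤ i → i ≤ N → Metric.diam (⇑(σ.toEquiv ^ i) '' Y) < δ) := by
  -- X is infinite: otherwise it would be discrete, contradicting perfectness.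
  have hinf : Infinite X := by
    by_contra h
    have : Finite X := not_infinite_iff_finite.mp h
    have : DiscreteTopology X := Finite.instDiscreteTopology
    have h1 : Filter.NeBot (nhdsWithin y {y}ᶜ) := PerfectSpace.not_isolated y
    have hbot : nhdsWithin y {y}ᶜ = ⊥ := by
      rw [nhdsWithin, nhds_discrete, Filter.inf_principal_eq_bot]
      simp
    exact h1.ne hbot
  -- continuity of integer powers
  have hcont : ∀ k : ℤ, Continuous fun x => (σ.toEquiv ^ k) x := by
    intro k
    induction k using Int.induction_on with
    | zero => simpa using continuous_id'
    | succ n ih =>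
        have : (fun x => (σ.toEquiv ^ ((n : ℤ) + 1)) x)
            = (fun x => (σ.toEquiv ^ (n : ℤ)) (σ x)) := by
          funext x
          rw [zpow_add_one, Equiv.Perm.mul_apply]
          rfl
        rw [this]; exact ih.comp σ.continuous
    | pred n ih =>
        have : (fun x => (σ.toEquiv ^ (-(n : ℤ) - 1)) x)
            = (fun x => (σ.toEquiv ^ (-(n : ℤ))) (σ.symm x)) := by
          funext x
          rw [zpow_sub_one, Equiv.Perm.mul_apply]
          rfl
        rw [this]; exact ih.comp σ.symm.continuous
  -- y is not periodic
  have hper : ∀ k : ℤ, k ≠ 0 → (σ.toEquiv ^ k) y ≠ y := by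
    intro k hk hfix
    set n : ℕ := k.natAbs with hn
    have hnpos : 0 < n := Int.natAbs_pos.mpr hk
    have hfixn : Function.IsFixedPt (⇑(σ.toEquiv ^ (n : ℤ))) y := by
      rcases Int.natAbs_eq k with h | h
      · rw [← h]; exact hfix
    -- k = -n
      · have : (n : ℤ) = -k := by omega
        rw [this]
        have := Function.IsFixedPt.perm_zpow (e := σ.toEquiv ^ k) (x := y) hfix (-1)
        simpa [zpow_neg] using this
    -- every orbit point equals one with exponent in [0, n)
    have horb : ∀ m : ℤ, (σ.toEquiv ^ m) y = (σ.toEquiv ^ (m % (n : ℤ))) y := by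
      intro m
      have hq : Function.IsFixedPt (⇑(σ.toEquiv ^ ((n : ℤ) * (m / (n : ℤ))))) y := by
        have := Function.IsFixedPt.perm_zpow (e := σ.toEquiv ^ (n : ℤ)) (x := y)
          hfixn (m / (n : ℤ))
        rwa [← zpow_mul] at this
      calc (σ.toEquiv ^ m) y
          = (σ.toEquiv ^ (m % (n : ℤ) + (n : ℤ) * (m / (n : ℤ)))) y := by
            rw [Int.emod_add_mul_ediv m (n : ℤ)]
        _ = (σ.toEquiv ^ (m % (n : ℤ)))
              ((σ.toEquiv ^ ((n : ℤ) * (m / (n : ℤ)))) y) := by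
            rw [zpow_add]; rfl
        _ = (σ.toEquiv ^ (m % (n : ℤ))) y := by rw [hq]
    -- finite invariant set
    set Z : Set X := Set.range (fun m : Fin n => (σ.toEquiv ^ (m : ℤ)) y) with hZdef
    have hmem : ∀ m : ℤ, (σ.toEquiv ^ m) y ∈ Z := by
      intro m
      rw [horb m]
      have h0 : 0 ≤ m % (n : ℤ) := Int.emod_nonneg m (by exact_mod_cast hnpos.ne')
      have h1 : m % (n : ℤ) < (n : ℤ) := Int.emod_lt_of_pos m (by exact_mod_cast hnpos)
      refine ⟨⟨(m % (n : ℤ)).toNat, ?_⟩, ?_⟩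
      · omega
      · show (σ.toEquiv ^ ((((m % (n : ℤ)).toNat : ℕ)) : ℤ)) y
            = (σ.toEquiv ^ (m % (n : ℤ))) y
        rw [Int.toNat_of_nonneg h0]
    have hZfin : Z.Finite := Set.finite_range _
    have hZclosed : IsClosed Z := hZfin.isClosed
    have hZinv : ⇑σ '' Z = Z := by
      apply Set.Subset.antisymm
      · rintro _ ⟨_, ⟨m, rfl⟩, rfl⟩
        have : σ ((σ.toEquiv ^ ((m : ℤ) : ℤ)) y) = (σ.toEquiv ^ (1 + ((m : ℤ) : ℤ))) y := by
          rw [zpow_one_add, Equiv.Perm.mul_apply]; rfl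
        rw [this]; exact hmem _
      · rintro _ ⟨m, rfl⟩
        refine ⟨(σ.toEquiv ^ (((m : ℤ) : ℤ) - 1)) y, hmem _, ?_⟩
        have : σ ((σ.toEquiv ^ (((m : ℤ) : ℤ) - 1)) y)
            = (σ.toEquiv ^ (1 + (((m : ℤ) : ℤ) - 1))) y := by
          rw [zpow_one_add, Equiv.Perm.mul_apply]; rfl
        rw [this]
        norm_num
    rcases hmin Z hZclosed hZinv with h | h
    · have : y ∈ Z := by simpa using hmem 0
      rw [h] at this; exact this
    · have : Finite X := by
        have : (Set.univ : Set X).Finite := h ▸ hZfin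
        exact Set.finite_univ_iff.mp this
      exact not_finite X
  -- the finitely many points σ^i y for i ∈ [-N₀, N] are distinct
  set I : Finset ℤ := Finset.Icc (-(N₀ : ℤ)) (N : ℤ) with hI
  have hdist : ∀ i ∈ I, ∀ j ∈ I, i ≠ j →
      (σ.toEquiv ^ i) y ≠ (σ.toEquiv ^ j) y := by
    intro i _ j _ hij heq
    apply hper (i - j) (sub_ne_zero.mpr hij)
    have := congrArg (⇑(σ.toEquiv ^ (-j))) heq
    simp only [← Equiv.Perm.mul_apply, ← zpow_add] at this
    rw [neg_add_cancel] at this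
    simpa [sub_eq_add_neg, add_comm] using this
  -- choose a small radius
  classical
  set P : Finset (ℤ × ℤ) := (I ×ˢ I).filter (fun p => p.1 ≠ p.2) with hP
  have hrpos : ∃ r : ℝ, 0 < r ∧ r ≤ δ / 3 ∧ ∀ p ∈ P,
      3 * r ≤ dist ((σ.toEquiv ^ p.1) y) ((σ.toEquiv ^ p.2) y) := by
    by_cases hPe : P = ∅
    · exact ⟨δ / 3, by linarith, le_refl _, by simp [hPe]⟩
    · have hPne : P.Nonempty := Finset.nonempty_iff_ne_empty.mpr hPe
      obtain ⟨p₀, hp₀, hmin'⟩ := P.exists_min_image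
        (fun p => dist ((σ.toEquiv ^ p.1) y) ((σ.toEquiv ^ p.2) y)) hPne
      set d := dist ((σ.toEquiv ^ p₀.1) y) ((σ.toEquiv ^ p₀.2) y) with hd
      have hdpos : 0 < d := by
        rw [hd, dist_pos]
        have := Finset.mem_filter.mp hp₀
        have hmem := Finset.mem_product.mp this.1
        exact hdist _ hmem.1 _ hmem.2 this.2
      refine ⟨min (δ / 3) (d / 3), lt_min (by linarith) (by linarith), min_le_left _ _, ?_⟩
      intro p hp
      have := hmin' p hp
      have h3 : 3 * min (δ / 3) (d / 3) ≤ 3 * (d / 3) := by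
        have := min_le_right (δ / 3) (d / 3); linarith
      calc 3 * min (δ / 3) (d / 3) ≤ d := by linarith
        _ ≤ _ := this
  obtain ⟨r, hrpos, hrδ, hrsep⟩ := hrpos
  -- find an open neighborhood U of y with σ^i(U) ⊆ ball(σ^i y, r) for all i ∈ I
  have hU : ∃ U : Set X, IsOpen U ∧ y ∈ U ∧ ∀ i ∈ I,
      (fun x => (σ.toEquiv ^ i) x) '' U ⊆ Metric.ball ((σ.toEquiv ^ i) y) r := by
    have hUi : ∀ i : ℤ, ∃ U : Set X, IsOpen U ∧ y ∈ U ∧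
        (fun x => (σ.toEquiv ^ i) x) '' U ⊆ Metric.ball ((σ.toEquiv ^ i) y) r := by
      intro i
      have hc := (hcont i).continuousAt (x := y)
      have hball : Metric.ball ((σ.toEquiv ^ i) y) r ∈ nhds ((σ.toEquiv ^ i) y) :=
        Metric.ball_mem_nhds _ hrpos
      have := hc.preimage_mem_nhds hball
      obtain ⟨U, hUsub, hUopen, hyU⟩ := mem_nhds_iff.mp this
      exact ⟨U, hUopen, hyU, Set.image_subset_iff.mpr hUsub⟩
    choose Ui hUio hUiy hUis using hUi
    refine ⟨⋂ i ∈ I, Ui i, isOpen_biInter_finset (fun i _ => hUio i),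
      Set.mem_biInter (fun i _ => hUiy i), fun i hi => ?_⟩
    refine subset_trans (Set.image_mono ?_) (hUis i)
    exact Set.biInter_subset_of_mem hi
  obtain ⟨U, hUopen, hyU, hUsub⟩ := hU
  -- clopen basis
  obtain ⟨Y, ⟨hyY, hYclopen⟩, hYU⟩ :=
    (nhds_basis_clopen y).mem_iff.mp (hUopen.mem_nhds hyU)
  have hYsub : ∀ i ∈ I, (fun x => (σ.toEquiv ^ i) x) '' Y
      ⊆ Metric.ball ((σ.toEquiv ^ i) y) r :=
    fun i hi => (Set.image_mono hYU).trans (hUsub i hi)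
  refine ⟨Y, hYclopen, hyY, ?_, ?_⟩
  · intro i j hi1 hi2 hj1 hj2 hij
    have hiI : i ∈ I := Finset.mem_Icc.mpr ⟨hi1, hi2⟩
    have hjI : j ∈ I := Finset.mem_Icc.mpr ⟨hj1, hj2⟩
    have hpP : (i, j) ∈ P := by
      rw [hP, Finset.mem_filter, Finset.mem_product]; exact ⟨⟨hiI, hjI⟩, hij⟩
    have hsep := hrsep _ hpP
    refine Set.disjoint_left.mpr fun x hxi hxj => ?_
    have h1 : dist x ((σ.toEquiv ^ i) y) < r := by
      have := hYsub i hiI hxi; rwa [Metric.mem_ball] at this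
    have h2 : dist x ((σ.toEquiv ^ j) y) < r := by
      have := hYsub j hjI hxj; rwa [Metric.mem_ball] at this
    have := dist_triangle ((σ.toEquiv ^ i) y) x ((σ.toEquiv ^ j) y)
    rw [dist_comm ((σ.toEquiv ^ i) y) x] at this
    simp only at hsep
    linarith
  · intro i hi1 hi2
    have hiI : i ∈ I := Finset.mem_Icc.mpr ⟨hi1, hi2⟩
    calc Metric.diam ((fun x => (σ.toEquiv ^ i) x) '' Y)
        ≤ Metric.diam (Metric.ball ((σ.toEquiv ^ i) y) r) :=
          Metric.diam_mono (hYsub i hiI) Metric.isBounded_ball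
      _ ≤ 2 * r := Metric.diam_ball hrpos.le
      _ < δ := by linarith
end

section
/- Let X be an infinite compact metric space, let σ : X → X be a minimal homeomorphism, let y ∈ X, and let U ⊆ X be a nonempty open set such that σ^{-1}(U \ {σ(y)}) ⊆ U and σ(U \ {y}) ⊆ U. Then U = X. -/
open Set

/-- If a closed nonempty set is forward-invariant under a minimal homeomorphism of a
compact space, it is everything. -/
lemma aux_forward_invariant (X : Type*) [MetricSpace X] [CompactSpace X] (σ : X ≃ₜ X)
    (hmin : ∀ Z : Set X, IsClosed Z → ⇑σ '' Z = Z → Z = ∅ ∨ Z = Set.univ)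
    (C : Set X) (hC : IsClosed C) (hCne : C.Nonempty) (hsub : ⇑σ '' C ⊆ C) :
    C = Set.univ := by
  set f : ℕ → Set X := fun n => (⇑σ)^[n] '' C with hf
  have key : ∀ n, f (n + 1) = (⇑σ)^[n] '' (⇑σ '' C) := fun n => by
    rw [hf]; simp only; rw [Function.iterate_succ, Set.image_comp]
  have key' : ∀ n, ⇑σ '' f n = f (n + 1) := fun n => by
    rw [hf]; simp only; rw [Function.iterate_succ', Set.image_comp]
  have hstep : ∀ n, f (n + 1) ⊆ f n := fun n => by
    rw [key n]; exact Set.image_mono hsub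
  have hcomp : ∀ n, IsCompact (f n) :=
    fun n => (hC.isCompact.image ((σ.continuous).iterate n))
  have hclosed : ∀ n, IsClosed (f n) := fun n => (hcomp n).isClosed
  have hne : ∀ n, (f n).Nonempty := fun n => hCne.image _
  have hZne : (⋂ n, f n).Nonempty :=
    IsCompact.nonempty_iInter_of_sequence_nonempty_isCompact_isClosed f hstep hne
      (hcomp 0) hclosed
  set Z := ⋂ n, f n with hZ
  have himg : ⇑σ '' Z = Z := by
    have heq : ⇑σ '' Z = ⋂ n, f (n + 1) := by
      rw [hZ, Set.image_iInter σ.bijective]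
      exact Set.iInter_congr key'
    rw [heq, hZ]
    apply Set.Subset.antisymm
    · intro x hx
      simp only [Set.mem_iInter] at hx ⊢
      intro n
      cases n with
      | zero => exact hstep 0 (hx 0)
      | succ m => exact hx m
    · intro x hx
      simp only [Set.mem_iInter] at hx ⊢
      intro n
      exact hx (n + 1)
  rcases hmin Z (isClosed_iInter hclosed) himg with h | h
  · exact absurd h (Nonempty.ne_empty hZne)
  · have hZC : Z ⊆ C := by
      rw [hZ]
      intro x hx
      have := Set.mem_iInter.mp hx 0
      simpa [hf] using this
    rw [h] at hZC
    exact Set.Subset.antisymm (Set.subset_univ _) hZC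
  
/-- Let `X` be an infinite compact metric space, `σ : X → X` a minimal
homeomorphism, `y ∈ X`, and `U ⊆ X` a nonempty open set with
`σ⁻¹(U \ {σ y}) ⊆ U` and `σ(U \ {y}) ⊆ U`.  Then `U = X`. -/
theorem invariant_up_to_orbit_open_set_is_everything
    (X : Type*) [MetricSpace X] [CompactSpace X] [Infinite X] (σ : X ≃ₜ X)
    (hmin : ∀ Z : Set X, IsClosed Z → ⇑σ '' Z = Z → Z = ∅ ∨ Z = Set.univ)
    (y : X) (U : Set X) (hUopen : IsOpen U) (hUne : U.Nonempty)
    (h1 : ⇑σ ⁻¹' (U \ {σ y}) ⊆ U)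
    (h2 : ⇑σ '' (U \ {y}) ⊆ U) :
    U = Set.univ := by
  by_contra hne
  have hCne : Uᶜ.Nonempty := by
    rw [Set.nonempty_compl]; exact hne
  have hCcl : IsClosed Uᶜ := hUopen.isClosed_compl
  by_cases hσy : σ y ∈ U
  · by_cases hy : y ∈ U
    · -- both y and σ y in U : σ '' U = U
      have himg : ⇑σ '' U = U := by
        apply Set.Subset.antisymm
        · rintro _ ⟨x, hx, rfl⟩
          by_cases hxy : x = y
          · subst hxy; exact hσy
          · exact h2 ⟨x, ⟨hx, hxy⟩, rfl⟩
        · intro x hx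
          by_cases hxσy : x = σ y
          · exact ⟨y, hy, hxσy.symm⟩
          · exact ⟨σ.symm x, h1 (by simpa using ⟨hx, hxσy⟩), by simp⟩
      have hcimg : ⇑σ '' Uᶜ = Uᶜ := by
        rw [Set.image_compl_eq σ.bijective, himg]
      rcases hmin Uᶜ hCcl hcimg with h | h
      · exact hCne.ne_empty h
      · rcases hUne with ⟨x, hx⟩
        have : x ∈ Uᶜ := h ▸ Set.mem_univ x
        exact this hx
    · -- y ∉ U : Uᶜ backward invariant, use σ.symm
      have hsub : ⇑σ.symm '' Uᶜ ⊆ Uᶜ := by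
        rintro _ ⟨x, hx, rfl⟩
        intro hmem
        exact hx (h2 ⟨σ.symm x, ⟨hmem, fun h => hy (h ▸ hmem)⟩, by simp⟩)
      have hmin' : ∀ Z : Set X, IsClosed Z → ⇑σ.symm '' Z = Z → Z = ∅ ∨ Z = Set.univ := by
        intro Z hZcl hZ
        apply hmin Z hZcl
        conv_lhs => rw [← hZ]
        rw [Set.image_image]
        simp
      have := aux_forward_invariant X σ.symm hmin' Uᶜ hCcl hCne hsub
      rcases hUne with ⟨x, hx⟩
      exact (this ▸ Set.mem_univ x : x ∈ Uᶜ) hx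
  · -- σ y ∉ U : Uᶜ forward invariant
    have hsub : ⇑σ '' Uᶜ ⊆ Uᶜ := by
      rintro _ ⟨x, hx, rfl⟩
      intro hmem
      exact hx (h1 ⟨hmem, fun h => hσy ((show σ x = σ y from h) ▸ hmem)⟩)
    have := aux_forward_invariant X σ hmin Uᶜ hCcl hCne hsub
    rcases hUne with ⟨x, hx⟩
    exact (this ▸ Set.mem_univ x : x ∈ Uᶜ) hx
end
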